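/- arXiv:2404.02513 — 4 statements merged into one kernel-verified Lean document; each statement's English description precedes it below -/
import Mathlib

section
/- Let α > 0 and β > −1, and for ν ∈ (0,1) and t ∈ (0,1] define φ_β(ν,t) = Σ_{l₁,l₂ ≥ 1} ((1 − e^{−2 ν t λ_{l₁,l₂}})/(2 ν λ_{l₁,l₂})) μ_{l₁,l₂}^{−α(β+1)}. Then this series converges, and for all ν ∈ (0,1) and 0 < t₁ ≤ t₂ ≤ 1 one has φ_β(ν,t₁) ≤ φ_β(ν,t₂) ≤ (t₂/t₁) φ_β(ν,t₁). -/
/-- `μ_{l₁,l₂} = π² (l₁² + l₂²)`. -/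
noncomputable def muP (l : ℕ+ × ℕ+) : ℝ :=
  Real.pi ^ 2 * (((l.1 : ℕ) : ℝ) ^ 2 + ((l.2 : ℕ) : ℝ) ^ 2)

/-- `λ_{l₁,l₂} = π² (l₁² + l₂²) + (κ² + η²)/4`. -/
noncomputable def lamP (κ η : ℝ) (l : ℕ+ × ℕ+) : ℝ := muP l + (κ ^ 2 + η ^ 2) / 4

/-- `φ_β(ν,t) = Σ_{l₁,l₂ ≥ 1} ((1 − e^{−2νtλ})/(2νλ)) μ^{−α(β+1)}`. -/
noncomputable def phiBt (κ η α β ν t : ℝ) : ℝ :=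
  ∑' l : ℕ+ × ℕ+,
    (1 - Real.exp (-2 * ν * t * lamP κ η l)) / (2 * ν * lamP κ η l) * muP l ^ (-(α * (β + 1)))

lemma muP_pos (l : ℕ+ × ℕ+) : 0 < muP l := by
  have h1 : (0:ℝ) < ((l.1 : ℕ) : ℝ) := by exact_mod_cast l.1.pos
  have h2 : (0:ℝ) < ((l.2 : ℕ) : ℝ) := by exact_mod_cast l.2.pos
  have := Real.pi_pos
  unfold muP
  positivity

lemma muP_le_lamP (κ η : ℝ) (l : ℕ+ × ℕ+) : muP l ≤ lamP κ η l := by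
  unfold lamP; nlinarith [sq_nonneg κ, sq_nonneg η]

lemma lamP_pos (κ η : ℝ) (l : ℕ+ × ℕ+) : 0 < lamP κ η l :=
  lt_of_lt_of_le (muP_pos l) (muP_le_lamP κ η l)

set_option maxHeartbeats 2000000 in
lemma summable_muP_rpow {p : ℝ} (hp : 1 < p) :
    Summable fun l : ℕ+ × ℕ+ => muP l ^ (-p) := by
  have hnat : Summable (fun n : ℕ => (n : ℝ) ^ (-p)) :=
    Real.summable_nat_rpow.mpr (by linarith)
  have hpnat : Summable (fun n : ℕ+ => ((n : ℕ) : ℝ) ^ (-p)) :=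
    hnat.comp_injective (fun a b h => PNat.coe_injective h)
  have hprod : Summable fun l : ℕ+ × ℕ+ =>
      (((l.1 : ℕ) : ℝ) ^ (-p)) * (((l.2 : ℕ) : ℝ) ^ (-p)) :=
      Summable.mul_of_nonneg hpnat hpnat (fun n => Real.rpow_nonneg (Nat.cast_nonneg _) _)
      (fun n => Real.rpow_nonneg (Nat.cast_nonneg _) _)
  have hC : Summable fun l : ℕ+ × ℕ+ =>
      ((Real.pi ^ 2) ^ (-p) * 2 ^ (-p)) *
        ((((l.1 : ℕ) : ℝ) ^ (-p)) * (((l.2 : ℕ) : ℝ) ^ (-p))) := hprod.mul_left _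
  refine hC.of_nonneg_of_le (fun l => Real.rpow_nonneg (muP_pos l).le _) (fun l => ?_)
  have h1 : (0:ℝ) < ((l.1 : ℕ) : ℝ) := by exact_mod_cast l.1.pos
  have h2 : (0:ℝ) < ((l.2 : ℕ) : ℝ) := by exact_mod_cast l.2.pos
  have hpi : (0:ℝ) < Real.pi ^ 2 := by have := Real.pi_pos; positivity
  have hsum : (0:ℝ) < 2 * (((l.1 : ℕ) : ℝ) * ((l.2 : ℕ) : ℝ)) := by positivity
  have hle : 2 * (((l.1 : ℕ) : ℝ) * ((l.2 : ℕ) : ℝ)) ≤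
      ((l.1 : ℕ) : ℝ) ^ 2 + ((l.2 : ℕ) : ℝ) ^ 2 := by nlinarith [sq_nonneg (((l.1:ℕ):ℝ) - ((l.2:ℕ):ℝ))]
  have key : muP l ^ (-p) ≤ (Real.pi ^ 2 * (2 * (((l.1 : ℕ) : ℝ) * ((l.2 : ℕ) : ℝ)))) ^ (-p) := by
    apply Real.rpow_le_rpow_of_nonpos (by positivity) _ (by linarith)
    unfold muP
    exact mul_le_mul_of_nonneg_left hle hpi.le
  refine key.trans_eq ?_
  rw [Real.mul_rpow hpi.le (by positivity), Real.mul_rpow (by norm_num) (by positivity),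
    Real.mul_rpow h1.le h2.le]
  ring

lemma term_nonneg (κ η ν t s : ℝ) (hν : 0 < ν) (ht : 0 ≤ t) (l : ℕ+ × ℕ+) :
    0 ≤ (1 - Real.exp (-2 * ν * t * lamP κ η l)) / (2 * ν * lamP κ η l) * muP l ^ (-s) := by
  have hlam := lamP_pos κ η l
  have hexp : Real.exp (-2 * ν * t * lamP κ η l) ≤ 1 := by
    rw [Real.exp_le_one_iff]
    nlinarith [mul_nonneg (mul_nonneg hν.le ht) hlam.le]
  have hd : (0:ℝ) < 2 * ν * lamP κ η l := by positivity
  have hr := Real.rpow_nonneg (muP_pos l).le (-s)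
  exact mul_nonneg (div_nonneg (by linarith) hd.le) hr

set_option maxHeartbeats 2000000 in
theorem stmt7 (κ η α β : ℝ) (hα : 0 < α) (hβ : -1 < β) :
    (∀ ν : ℝ, 0 < ν → ν < 1 → ∀ t : ℝ, 0 < t → t ≤ 1 →
      Summable fun l : ℕ+ × ℕ+ =>
        (1 - Real.exp (-2 * ν * t * lamP κ η l)) / (2 * ν * lamP κ η l) *
          muP l ^ (-(α * (β + 1))))
    ∧ ∀ ν : ℝ, 0 < ν → ν < 1 → ∀ t₁ t₂ : ℝ, 0 < t₁ → t₁ ≤ t₂ → t₂ ≤ 1 →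
        phiBt κ η α β ν t₁ ≤ phiBt κ η α β ν t₂ ∧
        phiBt κ η α β ν t₂ ≤ t₂ / t₁ * phiBt κ η α β ν t₁ := by
  set s : ℝ := α * (β + 1) with hs
  have hspos : 0 < s := by
    have hb : 0 < β + 1 := by linarith
    positivity
  -- summability
  have hsummable : ∀ ν : ℝ, 0 < ν → ∀ t : ℝ, 0 < t →
      Summable fun l : ℕ+ × ℕ+ =>
        (1 - Real.exp (-2 * ν * t * lamP κ η l)) / (2 * ν * lamP κ η l) * muP l ^ (-s) := by
    intro ν hν t ht
    have hmaj := (summable_muP_rpow (p := s + 1) (by linarith)).mul_left (1 / (2 * ν))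
    refine hmaj.of_nonneg_of_le (term_nonneg κ η ν t s hν ht.le) (fun l => ?_)
    have hμ := muP_pos l
    have hlam := lamP_pos κ η l
    have hd : (0:ℝ) < 2 * ν * lamP κ η l := by positivity
    have hexp0 : 0 < Real.exp (-2 * ν * t * lamP κ η l) := Real.exp_pos _
    have hnum : 1 - Real.exp (-2 * ν * t * lamP κ η l) ≤ 1 := by linarith
    have hμs : (0:ℝ) ≤ muP l ^ (-s) := Real.rpow_nonneg hμ.le _
    have step1 : (1 - Real.exp (-2 * ν * t * lamP κ η l)) / (2 * ν * lamP κ η l) * muP l ^ (-s)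
        ≤ 1 / (2 * ν * lamP κ η l) * muP l ^ (-s) := by
      apply mul_le_mul_of_nonneg_right _ hμs
      exact div_le_div_of_nonneg_right hnum hd.le
    refine step1.trans ?_
    have hinv : 1 / (2 * ν * lamP κ η l) ≤ 1 / (2 * ν * muP l) := by
      apply one_div_le_one_div_of_le (by positivity)
      have := muP_le_lamP κ η l
      nlinarith
    have heq : 1 / (2 * ν * muP l) * muP l ^ (-s) = 1 / (2 * ν) * muP l ^ (-(s + 1)) := by
      rw [neg_add, Real.rpow_add hμ, Real.rpow_neg_one]
      field_simp
    calc 1 / (2 * ν * lamP κ η l) * muP l ^ (-s)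
        ≤ 1 / (2 * ν * muP l) * muP l ^ (-s) := mul_le_mul_of_nonneg_right hinv hμs
      _ = 1 / (2 * ν) * muP l ^ (-(s + 1)) := heq
  constructor
  · intro ν hν _ t ht _; exact hsummable ν hν t ht
  intro ν hν hν1 t₁ t₂ ht₁ h12 ht₂
  have ht₂pos : 0 < t₂ := lt_of_lt_of_le ht₁ h12
  have hS1 := hsummable ν hν t₁ ht₁
  have hS2 := hsummable ν hν t₂ ht₂pos
  constructor
  · -- monotone
    refine Summable.tsum_le_tsum (fun l => ?_) hS1 hS2
    have hlam := lamP_pos κ η l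
    have hd : (0:ℝ) < 2 * ν * lamP κ η l := by positivity
    have hμs : (0:ℝ) ≤ muP l ^ (-s) := Real.rpow_nonneg (muP_pos l).le _
    apply mul_le_mul_of_nonneg_right _ hμs
    apply div_le_div_of_nonneg_right _ hd.le
    have : Real.exp (-2 * ν * t₂ * lamP κ η l) ≤ Real.exp (-2 * ν * t₁ * lamP κ η l) := by
      apply Real.exp_le_exp.mpr; nlinarith
    linarith
  · -- ratio bound
    have key : ∀ l : ℕ+ × ℕ+,
        (1 - Real.exp (-2 * ν * t₂ * lamP κ η l)) / (2 * ν * lamP κ η l) * muP l ^ (-s)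
        ≤ t₂ / t₁ *
          ((1 - Real.exp (-2 * ν * t₁ * lamP κ η l)) / (2 * ν * lamP κ η l) * muP l ^ (-s)) := by
      intro l
      have hlam := lamP_pos κ η l
      have hd : (0:ℝ) < 2 * ν * lamP κ η l := by positivity
      have hμs : (0:ℝ) ≤ muP l ^ (-s) := Real.rpow_nonneg (muP_pos l).le _
      have hp : (1:ℝ) ≤ t₂ / t₁ := (one_le_div ht₁).mpr h12
      -- Bernoulli: 1 + p*x ≤ (1+x)^p with x = exp(-2νt₁λ) - 1
      set x : ℝ := Real.exp (-2 * ν * t₁ * lamP κ η l) - 1 with hx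
      have hx1 : -1 ≤ x := by
        have h := (Real.exp_pos (-2 * ν * t₁ * lamP κ η l)).le
        simp only [hx]; linarith
      have hbern := one_add_mul_self_le_rpow_one_add hx1 hp
      have hpow : (1 + x) ^ (t₂ / t₁) = Real.exp (-2 * ν * t₂ * lamP κ η l) := by
        have : 1 + x = Real.exp (-2 * ν * t₁ * lamP κ η l) := by simp [hx]
        rw [this, ← Real.exp_mul]
        congr 1
        field_simp
      rw [hpow] at hbern
      -- hbern : 1 + (t₂/t₁) * x ≤ exp(-2νt₂λ)
      have hnum : 1 - Real.exp (-2 * ν * t₂ * lamP κ η l)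
          ≤ t₂ / t₁ * (1 - Real.exp (-2 * ν * t₁ * lamP κ η l)) := by
        have : t₂ / t₁ * (1 - Real.exp (-2 * ν * t₁ * lamP κ η l)) = -(t₂ / t₁ * x) := by
          simp [hx]; ring
        rw [this]; linarith
      calc (1 - Real.exp (-2 * ν * t₂ * lamP κ η l)) / (2 * ν * lamP κ η l) * muP l ^ (-s)
          ≤ (t₂ / t₁ * (1 - Real.exp (-2 * ν * t₁ * lamP κ η l))) / (2 * ν * lamP κ η l)
              * muP l ^ (-s) := by
            apply mul_le_mul_of_nonneg_right _ hμs
            exact div_le_div_of_nonneg_right hnum hd.le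
        _ = t₂ / t₁ *
              ((1 - Real.exp (-2 * ν * t₁ * lamP κ η l)) / (2 * ν * lamP κ η l)
                * muP l ^ (-s)) := by ring
    have := Summable.tsum_le_tsum key hS2 (hS1.mul_left (t₂ / t₁))
    unfold phiBt
    rw [← hs]
    calc (∑' l : ℕ+ × ℕ+, (1 - Real.exp (-2 * ν * t₂ * lamP κ η l)) / (2 * ν * lamP κ η l) * muP l ^ (-s))
        ≤ ∑' l : ℕ+ × ℕ+, t₂ / t₁ *
            ((1 - Real.exp (-2 * ν * t₁ * lamP κ η l)) / (2 * ν * lamP κ η l) * muP l ^ (-s)) := this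
      _ = t₂ / t₁ * ∑' l : ℕ+ × ℕ+,
            (1 - Real.exp (-2 * ν * t₁ * lamP κ η l)) / (2 * ν * lamP κ η l) * muP l ^ (-s) :=
          tsum_mul_left
end

section
/- For every s > 0 there exists a constant C > 0 such that for all u ∈ (0,1]: Σ_{l₁,l₂ ≥ 1} e^{−u(l₁²+l₂²)} (l₁²+l₂²)^{−s} ≤ C·g(u), where g(u) = u^{s−1} if s < 1, g(u) = 1 − log u if s = 1, and g(u) = 1 if s > 1. -/
open Real Finset

set_option maxHeartbeats 1000000


-- Bernoulli-type: (1-t)^p ≤ 1 - p*t/2 for t ∈ (0,1], p ∈ (0,1]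
lemma aux_bernoulli {t p : ℝ} (ht0 : 0 < t) (ht1 : t ≤ 1) (hp0 : 0 < p) (hp1 : p ≤ 1) :
    (1 - t) ^ p ≤ 1 - p * t / 2 := by
  have hq0 : 0 ≤ p * t := by positivity
  have hq1 : p * t ≤ 1 := by nlinarith
  rcases eq_or_lt_of_le ht1 with h1 | h1
  · rw [← h1]
    norm_num
    rw [Real.zero_rpow hp0.ne']
    nlinarith
  · have h0 : (0:ℝ) < 1 - t := by linarith
    have hlog : Real.log (1 - t) ≤ -t := by
      have := Real.log_le_sub_one_of_pos h0
      linarith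
    have h2 : (1 - t) ^ p = Real.exp (Real.log (1 - t) * p) := by
      rw [Real.rpow_def_of_pos h0]
    rw [h2]
    have h3 : Real.exp (Real.log (1 - t) * p) ≤ Real.exp (-(p * t)) := by
      apply Real.exp_le_exp.mpr
      nlinarith
    have h4 : Real.exp (-(p * t)) ≤ (1 + p * t)⁻¹ := by
      rw [Real.exp_neg]
      apply inv_anti₀ (by nlinarith)
      have := Real.add_one_le_exp (p * t)
      linarith
    have h5 : (1 + p * t)⁻¹ ≤ 1 - p * t / 2 := by
      rw [inv_le_iff_one_le_mul₀ (by nlinarith)]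
      nlinarith
    linarith

-- key difference inequality
lemma aux_rpow_diff {p : ℝ} (hp0 : 0 < p) (hp1 : p ≤ 1) {x : ℝ} (hx : 1 ≤ x) :
    p / 2 * x ^ (p - 1) ≤ x ^ p - (x - 1) ^ p := by
  have hx0 : (0:ℝ) < x := by linarith
  have ht0 : 0 < 1 / x := by positivity
  have ht1 : 1 / x ≤ 1 := by
    rw [div_le_one hx0]; exact hx
  have key : (x - 1) ^ p ≤ x ^ p * (1 - p * (1/x) / 2) := by
    have hxm : x - 1 = x * (1 - 1/x) := by field_simp
    rw [hxm, Real.mul_rpow hx0.le (by linarith)]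
    have := aux_bernoulli ht0 ht1 hp0 hp1
    have hxp : (0:ℝ) ≤ x ^ p := (Real.rpow_pos_of_pos hx0 p).le
    nlinarith
  have hxp1 : x ^ (p - 1) = x ^ p * (1/x) := by
    rw [Real.rpow_sub hx0, Real.rpow_one]
    field_simp
  rw [hxp1]
  nlinarith [Real.rpow_pos_of_pos hx0 p]

-- head sum bound for 0 < a < 1
lemma aux_head_lt {a : ℝ} (ha0 : 0 < a) (ha1 : a < 1) (L : ℕ) :
    ∑ n ∈ range L, ((n:ℝ) + 1) ^ (-a) ≤ 2 / (1 - a) * (L:ℝ) ^ (1 - a) := by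
  have hp0 : 0 < 1 - a := by linarith
  have key : ∀ n : ℕ, ((n:ℝ) + 1) ^ (-a) ≤
      2 / (1 - a) * (((n:ℝ) + 1) ^ (1 - a) - (n:ℝ) ^ (1 - a)) := by
    intro n
    have hx : (1:ℝ) ≤ (n:ℝ) + 1 := by
      have : (0:ℝ) ≤ (n:ℝ) := Nat.cast_nonneg n
      linarith
    have h1 := aux_rpow_diff hp0 (by linarith) hx
    have he : ((n:ℝ) + 1) ^ ((1 - a) - 1) = ((n:ℝ) + 1) ^ (-a) := by ring_nf
    have h2 : (n:ℝ) + 1 - 1 = (n:ℝ) := by ring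
    rw [he, h2] at h1
    have h3 := mul_le_mul_of_nonneg_left h1 (by positivity : (0:ℝ) ≤ 2/(1-a))
    have h4 : 2/(1-a) * ((1 - a)/2 * (((n:ℝ)+1) ^ (-a))) = ((n:ℝ)+1) ^ (-a) := by
      field_simp
    calc ((n:ℝ) + 1) ^ (-a) = 2/(1-a) * ((1 - a)/2 * (((n:ℝ)+1) ^ (-a))) := h4.symm
      _ ≤ 2 / (1 - a) * (((n:ℝ) + 1) ^ (1 - a) - (n:ℝ) ^ (1 - a)) := h3
  calc ∑ n ∈ range L, ((n:ℝ) + 1) ^ (-a)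
      ≤ ∑ n ∈ range L, 2 / (1 - a) * (((n:ℝ) + 1) ^ (1 - a) - (n:ℝ) ^ (1 - a)) :=
        Finset.sum_le_sum fun n _ => key n
    _ = 2 / (1 - a) * ∑ n ∈ range L, ((((n+1):ℕ):ℝ) ^ (1 - a) - ((n:ℕ):ℝ) ^ (1 - a)) := by
        rw [← Finset.mul_sum]
        congr 1
        apply Finset.sum_congr rfl
        intro n _
        push_cast
        ring_nf
    _ = 2 / (1 - a) * ((L:ℝ) ^ (1 - a) - ((0:ℕ):ℝ) ^ (1 - a)) := by
        rw [Finset.sum_range_sub (fun i : ℕ => ((i:ℕ):ℝ) ^ (1 - a))]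
    _ ≤ 2 / (1 - a) * (L:ℝ) ^ (1 - a) := by
        simp only [Nat.cast_zero]
        rw [Real.zero_rpow hp0.ne']
        simp

-- head sum bound for a = 1
lemma aux_head_one (L : ℕ) :
    ∑ n ∈ range L, ((n:ℝ) + 1)⁻¹ ≤ 2 * Real.log ((L:ℝ) + 1) := by
  have key : ∀ n : ℕ, ((n:ℝ) + 1)⁻¹ ≤
      2 * (Real.log ((n:ℝ) + 1 + 1) - Real.log ((n:ℝ) + 1)) := by
    intro n
    have hn : (0:ℝ) ≤ (n:ℝ) := Nat.cast_nonneg n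
    have h1 : (0:ℝ) < (n:ℝ) + 1 := by linarith
    have h2 : (0:ℝ) < (n:ℝ) + 1 + 1 := by linarith
    have hlog : Real.log (((n:ℝ) + 1) / ((n:ℝ) + 1 + 1)) ≤ ((n:ℝ)+1)/((n:ℝ)+1+1) - 1 :=
      Real.log_le_sub_one_of_pos (by positivity)
    rw [Real.log_div h1.ne' h2.ne'] at hlog
    have h3 : ((n:ℝ)+1)/((n:ℝ)+1+1) - 1 = -(1 / ((n:ℝ)+1+1)) := by field_simp; ring
    rw [h3] at hlog
    have h4 : 1 / ((n:ℝ)+1+1) ≤ Real.log ((n:ℝ) + 1 + 1) - Real.log ((n:ℝ) + 1) := by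
      linarith
    have h5 : ((n:ℝ) + 1)⁻¹ ≤ 2 * (1 / ((n:ℝ)+1+1)) := by
      rw [inv_le_iff_one_le_mul₀ h1, mul_one_div, div_mul_eq_mul_div, le_div_iff₀ h2]
      nlinarith
    linarith
  calc ∑ n ∈ range L, ((n:ℝ) + 1)⁻¹
      ≤ ∑ n ∈ range L, 2 * (Real.log ((((n+1):ℕ):ℝ) + 1) - Real.log (((n:ℕ):ℝ) + 1)) := by
        apply Finset.sum_le_sum
        intro n _
        have := key n
        push_cast
        linarith
    _ = 2 * (Real.log ((L:ℝ) + 1) - Real.log (((0:ℕ):ℝ) + 1)) := by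
        rw [← Finset.mul_sum, Finset.sum_range_sub (fun i : ℕ => Real.log (((i:ℕ):ℝ) + 1))]
    _ ≤ 2 * Real.log ((L:ℝ) + 1) := by norm_num


-- 1D summability
lemma aux_summable1 {u : ℝ} (hu : 0 < u) (a : ℝ) (ha : 0 ≤ a) :
    Summable (fun n : ℕ => Real.exp (-u * ((n:ℝ) + 1) ^ 2) * ((n:ℝ) + 1) ^ (-a)) := by
  have hr0 : (0:ℝ) ≤ Real.exp (-u) := (Real.exp_pos _).le
  have hr1 : Real.exp (-u) < 1 := Real.exp_lt_one_iff.mpr (by linarith)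
  apply Summable.of_nonneg_of_le (fun n => by positivity) (fun n => ?_)
    (summable_geometric_of_lt_one hr0 hr1)
  have hn : (0:ℝ) ≤ (n:ℝ) := Nat.cast_nonneg n
  have h1 : ((n:ℝ) + 1) ^ (-a) ≤ 1 :=
    Real.rpow_le_one_of_one_le_of_nonpos (by linarith) (by linarith)
  have h2 : Real.exp (-u * ((n:ℝ) + 1) ^ 2) ≤ Real.exp (-u) ^ n := by
    rw [← Real.exp_nat_mul]
    apply Real.exp_le_exp.mpr
    nlinarith [mul_nonneg hu.le (mul_nonneg hn hn), mul_nonneg hu.le hn]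
  calc Real.exp (-u * ((n:ℝ) + 1) ^ 2) * ((n:ℝ) + 1) ^ (-a)
      ≤ Real.exp (-u * ((n:ℝ) + 1) ^ 2) * 1 := by
        apply mul_le_mul_of_nonneg_left h1 (Real.exp_pos _).le
    _ = Real.exp (-u * ((n:ℝ) + 1) ^ 2) := mul_one _
    _ ≤ Real.exp (-u) ^ n := h2

-- tail bound
lemma aux_tail {u a : ℝ} (hu : 0 < u) (ha : 0 ≤ a) {L : ℕ} (hL : 1 ≤ L) :
    ∑' n : {n : ℕ // n ∉ range L},
        Real.exp (-u * (((n:ℕ):ℝ) + 1) ^ 2) * (((n:ℕ):ℝ) + 1) ^ (-a)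
      ≤ (L:ℝ) ^ (-a) * (1 - Real.exp (-(u * L)))⁻¹ := by
  have hL0 : (0:ℝ) < L := by exact_mod_cast hL
  have hr0 : (0:ℝ) ≤ Real.exp (-(u * L)) := (Real.exp_pos _).le
  have hr1 : Real.exp (-(u * L)) < 1 := Real.exp_lt_one_iff.mpr (by nlinarith)
  set r := Real.exp (-(u * L)) with hr
  have hgs : Summable (fun n : ℕ => (L:ℝ) ^ (-a) * r ^ n) :=
    (summable_geometric_of_lt_one hr0 hr1).mul_left _
  have hterm : ∀ n : {n : ℕ // n ∉ range L},
      Real.exp (-u * (((n:ℕ):ℝ) + 1) ^ 2) * (((n:ℕ):ℝ) + 1) ^ (-a)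
        ≤ (L:ℝ) ^ (-a) * r ^ (n:ℕ) := by
    rintro ⟨n, hn⟩
    simp only [Finset.mem_range, not_lt] at hn
    have hnc : (L:ℝ) ≤ (n:ℝ) := by exact_mod_cast hn
    have h1 : (((n:ℕ):ℝ) + 1) ^ (-a) ≤ (L:ℝ) ^ (-a) :=
      Real.rpow_le_rpow_of_nonpos hL0 (by simpa using by linarith) (by linarith)
    have h2 : Real.exp (-u * (((n:ℕ):ℝ) + 1) ^ 2) ≤ r ^ (n:ℕ) := by
      rw [hr, ← Real.exp_nat_mul]
      apply Real.exp_le_exp.mpr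
      have : (L:ℝ) * n ≤ ((n:ℝ) + 1) ^ 2 := by nlinarith
      nlinarith
    calc Real.exp (-u * (((n:ℕ):ℝ) + 1) ^ 2) * (((n:ℕ):ℝ) + 1) ^ (-a)
        ≤ r ^ (n:ℕ) * (L:ℝ) ^ (-a) :=
          mul_le_mul h2 h1 (by positivity) (by positivity)
      _ = (L:ℝ) ^ (-a) * r ^ (n:ℕ) := mul_comm _ _
  have hsub : Summable (fun n : {n : ℕ // n ∉ range L} => (L:ℝ) ^ (-a) * r ^ (n:ℕ)) :=
    hgs.subtype _
  calc ∑' n : {n : ℕ // n ∉ range L},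
          Real.exp (-u * (((n:ℕ):ℝ) + 1) ^ 2) * (((n:ℕ):ℝ) + 1) ^ (-a)
      ≤ ∑' n : {n : ℕ // n ∉ range L}, (L:ℝ) ^ (-a) * r ^ (n:ℕ) := by
        apply Summable.tsum_le_tsum hterm ?_ hsub
        exact ((aux_summable1 hu a ha).subtype _)
    _ ≤ ∑' n : ℕ, (L:ℝ) ^ (-a) * r ^ n := by
        apply Summable.tsum_le_tsum_of_inj (Subtype.val) Subtype.val_injective
          (fun c _ => by positivity) (fun b => le_refl _) hsub hgs
    _ = (L:ℝ) ^ (-a) * (1 - r)⁻¹ := by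
        rw [tsum_mul_left, tsum_geometric_of_lt_one hr0 hr1]


-- inverse of (1 - exp(-x)) bound for 0 < x ≤ 2
lemma aux_inv_exp {x : ℝ} (hx0 : 0 < x) (hx2 : x ≤ 2) :
    (1 - Real.exp (-x))⁻¹ ≤ Real.exp 2 * x⁻¹ := by
  have h1 : x * Real.exp (-x) ≤ 1 - Real.exp (-x) := by
    have h := Real.add_one_le_exp x
    have h2 := Real.exp_pos (-x)
    have h3 : Real.exp (-x) * Real.exp x = 1 := by
      rw [← Real.exp_add]; norm_num
    nlinarith
  have h4 : Real.exp (-(2:ℝ)) ≤ Real.exp (-x) := Real.exp_le_exp.mpr (by linarith)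
  have h5 : x * Real.exp (-(2:ℝ)) ≤ 1 - Real.exp (-x) := by nlinarith
  have h6 : 0 < x * Real.exp (-(2:ℝ)) := by positivity
  have h7 := inv_anti₀ h6 h5
  have h8 : (x * Real.exp (-(2:ℝ)))⁻¹ = Real.exp 2 * x⁻¹ := by
    rw [mul_inv, Real.exp_neg, inv_inv, mul_comm]
  rw [h8] at h7
  exact h7

-- properties of the cutoff
lemma aux_L {u : ℝ} (hu : 0 < u) (hu1 : u ≤ 1) :
    1 ≤ ⌈u ^ (-(1/2):ℝ)⌉₊ ∧ u ^ (-(1/2):ℝ) ≤ ((⌈u ^ (-(1/2):ℝ)⌉₊ : ℕ):ℝ) ∧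
      ((⌈u ^ (-(1/2):ℝ)⌉₊ : ℕ):ℝ) ≤ 2 * u ^ (-(1/2):ℝ) ∧
      0 < u * ((⌈u ^ (-(1/2):ℝ)⌉₊ : ℕ):ℝ) ∧ u * ((⌈u ^ (-(1/2):ℝ)⌉₊ : ℕ):ℝ) ≤ 2 := by
  set v := u ^ (-(1/2):ℝ) with hv
  have hv0 : 0 < v := Real.rpow_pos_of_pos hu _
  have hv1 : 1 ≤ v := Real.one_le_rpow_of_pos_of_le_one_of_nonpos hu hu1 (by norm_num)
  have h1 : 1 ≤ ⌈v⌉₊ := Nat.one_le_ceil_iff.mpr hv0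
  have h2 : v ≤ (⌈v⌉₊ : ℝ) := Nat.le_ceil v
  have h3 : ((⌈v⌉₊ : ℕ):ℝ) ≤ 2 * v := by
    have := Nat.ceil_lt_add_one hv0.le
    linarith
  have huv : u * v = u ^ ((1/2):ℝ) := by
    nth_rewrite 1 [← Real.rpow_one u]
    rw [hv, ← Real.rpow_add hu]
    norm_num
  have h5 : u * ((⌈v⌉₊ : ℕ):ℝ) ≤ 2 := by
    have hx : u * ((⌈v⌉₊ : ℕ):ℝ) ≤ u * (2 * v) := by
      apply mul_le_mul_of_nonneg_left h3 hu.le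
    have hu12 : u ^ ((1/2):ℝ) ≤ 1 := Real.rpow_le_one hu.le hu1 (by norm_num)
    nlinarith
  exact ⟨h1, h2, h3, by positivity, h5⟩

-- main 1D bound, case a < 1
lemma aux_oneDim_lt {a : ℝ} (ha0 : 0 < a) (ha1 : a < 1) {u : ℝ} (hu : 0 < u) (hu1 : u ≤ 1) :
    ∑' n : ℕ, Real.exp (-u * ((n:ℝ) + 1) ^ 2) * ((n:ℝ) + 1) ^ (-a)
      ≤ (8 / (1 - a) + Real.exp 2) * u ^ ((a - 1)/2) := by
  set v := u ^ (-(1/2):ℝ) with hv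
  obtain ⟨h1, h2, h3, h4, h5⟩ := aux_L hu hu1
  set L := ⌈v⌉₊ with hL
  have hL0 : (0:ℝ) < L := by exact_mod_cast h1
  have hv0 : 0 < v := Real.rpow_pos_of_pos hu _
  have hva : v ^ (1 - a) = u ^ ((a-1)/2) := by
    rw [hv, ← Real.rpow_mul hu.le]
    congr 1
    ring
  have hsum := aux_summable1 hu a ha0.le
  have hsplit := (Summable.sum_add_tsum_subtype_compl hsum (range L)).symm
  rw [hsplit]
  -- head bound
  have hhead : ∑ n ∈ range L, Real.exp (-u * ((n:ℝ) + 1) ^ 2) * ((n:ℝ) + 1) ^ (-a)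
      ≤ 4 / (1 - a) * u ^ ((a-1)/2) := by
    have hh1 : ∑ n ∈ range L, Real.exp (-u * ((n:ℝ) + 1) ^ 2) * ((n:ℝ) + 1) ^ (-a)
        ≤ ∑ n ∈ range L, ((n:ℝ) + 1) ^ (-a) := by
      apply Finset.sum_le_sum
      intro n _
      have hn : (0:ℝ) ≤ (n:ℝ) := Nat.cast_nonneg n
      have he : Real.exp (-u * ((n:ℝ) + 1) ^ 2) ≤ 1 := by
        apply Real.exp_le_one_iff.mpr
        nlinarith
      have hp : (0:ℝ) ≤ ((n:ℝ) + 1) ^ (-a) := by positivity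
      nlinarith
    have hh2 := aux_head_lt ha0 ha1 L
    have hh3 : (L:ℝ) ^ (1 - a) ≤ 2 * u ^ ((a-1)/2) := by
      have hle : (L:ℝ) ^ (1 - a) ≤ (2 * v) ^ (1 - a) :=
        Real.rpow_le_rpow hL0.le h3 (by linarith)
      have heq : (2 * v) ^ (1 - a) = 2 ^ (1 - a) * v ^ (1 - a) :=
        Real.mul_rpow (by norm_num) hv0.le
      have h2e : (2:ℝ) ^ (1 - a) ≤ 2 := by
        nth_rewrite 2 [← Real.rpow_one 2]
        apply Real.rpow_le_rpow_of_exponent_le (by norm_num) (by linarith)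
      have hvp : 0 ≤ v ^ (1 - a) := (Real.rpow_pos_of_pos hv0 _).le
      rw [← hva]
      nlinarith
    have hp1a : (0:ℝ) < 1 - a := by linarith
    have hc : 0 ≤ 2 / (1 - a) := by positivity
    calc ∑ n ∈ range L, Real.exp (-u * ((n:ℝ) + 1) ^ 2) * ((n:ℝ) + 1) ^ (-a)
        ≤ 2 / (1 - a) * (L:ℝ) ^ (1 - a) := le_trans hh1 hh2
      _ ≤ 2 / (1 - a) * (2 * u ^ ((a-1)/2)) := mul_le_mul_of_nonneg_left hh3 hc
      _ = 4 / (1 - a) * u ^ ((a-1)/2) := by ring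
  -- tail bound
  have htail : ∑' n : {n : ℕ // n ∉ range L},
        Real.exp (-u * (((n:ℕ):ℝ) + 1) ^ 2) * (((n:ℕ):ℝ) + 1) ^ (-a)
      ≤ Real.exp 2 * u ^ ((a-1)/2) := by
    have ht1 := aux_tail hu ha0.le h1 (u := u) (a := a)
    have ht2 := aux_inv_exp h4 h5
    have hLa : (0:ℝ) < (L:ℝ) ^ (-a) := Real.rpow_pos_of_pos hL0 _
    have ht3 : (L:ℝ) ^ (-a) * (1 - Real.exp (-(u * L)))⁻¹
        ≤ (L:ℝ) ^ (-a) * (Real.exp 2 * (u * L)⁻¹) :=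
      mul_le_mul_of_nonneg_left ht2 hLa.le
    have ht4 : (L:ℝ) ^ (-a) * (Real.exp 2 * (u * L)⁻¹)
        = Real.exp 2 * u⁻¹ * ((L:ℝ) ^ (-a) * ((L:ℝ))⁻¹) := by
      rw [mul_inv]
      ring
    have ht5 : (L:ℝ) ^ (-a) * ((L:ℝ))⁻¹ = (L:ℝ) ^ (-(a+1)) := by
      rw [← Real.rpow_neg_one (L:ℝ), ← Real.rpow_add hL0]
      congr 1
      ring
    have ht6 : (L:ℝ) ^ (-(a+1)) ≤ v ^ (-(a+1)) :=
      Real.rpow_le_rpow_of_nonpos hv0 h2 (by linarith)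
    have ht7 : v ^ (-(a+1)) = u ^ ((a+1)/2) := by
      rw [hv, ← Real.rpow_mul hu.le]
      congr 1
      ring
    have ht8 : u⁻¹ * u ^ ((a+1)/2) = u ^ ((a-1)/2) := by
      rw [← Real.rpow_neg_one u, ← Real.rpow_add hu]
      congr 1
      ring
    calc ∑' n : {n : ℕ // n ∉ range L},
          Real.exp (-u * (((n:ℕ):ℝ) + 1) ^ 2) * (((n:ℕ):ℝ) + 1) ^ (-a)
        ≤ (L:ℝ) ^ (-a) * (1 - Real.exp (-(u * L)))⁻¹ := ht1
      _ ≤ (L:ℝ) ^ (-a) * (Real.exp 2 * (u * L)⁻¹) := ht3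
      _ = Real.exp 2 * u⁻¹ * ((L:ℝ) ^ (-a) * ((L:ℝ))⁻¹) := ht4
      _ = Real.exp 2 * (u⁻¹ * (L:ℝ) ^ (-(a+1))) := by rw [ht5]; ring
      _ ≤ Real.exp 2 * (u⁻¹ * v ^ (-(a+1))) := by
          apply mul_le_mul_of_nonneg_left _ (Real.exp_pos 2).le
          apply mul_le_mul_of_nonneg_left ht6 (by positivity)
      _ = Real.exp 2 * u ^ ((a-1)/2) := by rw [ht7, ht8]
  have hfin : (8 / (1 - a) + Real.exp 2) * u ^ ((a - 1)/2)
      = 4 / (1 - a) * u ^ ((a-1)/2) + Real.exp 2 * u ^ ((a-1)/2)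
        + 4 / (1 - a) * u ^ ((a-1)/2) := by ring
  have hp1a : (0:ℝ) < 1 - a := by linarith
  have hpos : 0 ≤ 4 / (1 - a) * u ^ ((a-1)/2) := by positivity
  rw [hfin]
  linarith



lemma aux_oneDim_one {u : ℝ} (hu : 0 < u) (hu1 : u ≤ 1) :
    ∑' n : ℕ, Real.exp (-u * ((n:ℝ) + 1) ^ 2) * ((n:ℝ) + 1) ^ (-(1:ℝ))
      ≤ (2 * Real.log 3 + Real.exp 2 + 1) * (1 - Real.log u) := by
  set v := u ^ (-(1/2):ℝ) with hv
  obtain ⟨h1, h2, h3, h4, h5⟩ := aux_L hu hu1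
  set L := ⌈v⌉₊ with hL
  have hL0 : (0:ℝ) < L := by exact_mod_cast h1
  have hv0 : 0 < v := Real.rpow_pos_of_pos hu _
  have hv1 : 1 ≤ v := Real.one_le_rpow_of_pos_of_le_one_of_nonpos hu hu1 (by norm_num)
  have hlogu : Real.log u ≤ 0 := Real.log_nonpos hu.le hu1
  have hsum := aux_summable1 hu 1 (by norm_num)
  have hsplit := (Summable.sum_add_tsum_subtype_compl hsum (range L)).symm
  rw [hsplit]
  -- head
  have hhead : ∑ n ∈ range L, Real.exp (-u * ((n:ℝ) + 1) ^ 2) * ((n:ℝ) + 1) ^ (-(1:ℝ))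
      ≤ 2 * Real.log 3 + (- Real.log u) := by
    have hh1 : ∑ n ∈ range L, Real.exp (-u * ((n:ℝ) + 1) ^ 2) * ((n:ℝ) + 1) ^ (-(1:ℝ))
        ≤ ∑ n ∈ range L, ((n:ℝ) + 1)⁻¹ := by
      apply Finset.sum_le_sum
      intro n _
      have hn : (0:ℝ) ≤ (n:ℝ) := Nat.cast_nonneg n
      have he : Real.exp (-u * ((n:ℝ) + 1) ^ 2) ≤ 1 := by
        apply Real.exp_le_one_iff.mpr
        nlinarith
      rw [Real.rpow_neg_one]
      have hp : (0:ℝ) ≤ ((n:ℝ) + 1)⁻¹ := by positivity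
      nlinarith
    have hh2 := aux_head_one L
    have hh3 : Real.log ((L:ℝ) + 1) ≤ Real.log 3 + (-(1/2)) * Real.log u := by
      have hle : (L:ℝ) + 1 ≤ 3 * v := by linarith
      have hlog1 : Real.log ((L:ℝ) + 1) ≤ Real.log (3 * v) :=
        Real.log_le_log (by linarith) hle
      have hlog2 : Real.log (3 * v) = Real.log 3 + Real.log v :=
        Real.log_mul (by norm_num) (by linarith)
      have hlog3 : Real.log v = (-(1/2)) * Real.log u := by
        rw [hv, Real.log_rpow hu]
      linarith
    nlinarith
  -- tail
  have htail : ∑' n : {n : ℕ // n ∉ range L},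
        Real.exp (-u * (((n:ℕ):ℝ) + 1) ^ 2) * (((n:ℕ):ℝ) + 1) ^ (-(1:ℝ))
      ≤ Real.exp 2 := by
    have ht1 := aux_tail hu (by norm_num : (0:ℝ) ≤ 1) h1 (u := u)
    have ht2 := aux_inv_exp h4 h5
    have hLa : (0:ℝ) < (L:ℝ) ^ (-(1:ℝ)) := Real.rpow_pos_of_pos hL0 _
    have ht3 : (L:ℝ) ^ (-(1:ℝ)) * (1 - Real.exp (-(u * L)))⁻¹
        ≤ (L:ℝ) ^ (-(1:ℝ)) * (Real.exp 2 * (u * L)⁻¹) :=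
      mul_le_mul_of_nonneg_left ht2 hLa.le
    have ht5 : (L:ℝ) ^ (-(1:ℝ)) * ((L:ℝ))⁻¹ = (L:ℝ) ^ (-(2:ℝ)) := by
      rw [← Real.rpow_neg_one (L:ℝ), ← Real.rpow_add hL0]
      norm_num
    have ht6 : (L:ℝ) ^ (-(2:ℝ)) ≤ v ^ (-(2:ℝ)) :=
      Real.rpow_le_rpow_of_nonpos hv0 h2 (by norm_num)
    have ht7 : v ^ (-(2:ℝ)) = u := by
      rw [hv, ← Real.rpow_mul hu.le]
      norm_num
    have ht8 : (L:ℝ) ^ (-(1:ℝ)) * (Real.exp 2 * (u * L)⁻¹)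
        = Real.exp 2 * u⁻¹ * ((L:ℝ) ^ (-(1:ℝ)) * ((L:ℝ))⁻¹) := by
      rw [mul_inv]; ring
    have ht9 : Real.exp 2 * u⁻¹ * ((L:ℝ) ^ (-(1:ℝ)) * ((L:ℝ))⁻¹) ≤ Real.exp 2 := by
      rw [ht5]
      have : Real.exp 2 * u⁻¹ * (L:ℝ) ^ (-(2:ℝ)) ≤ Real.exp 2 * u⁻¹ * v ^ (-(2:ℝ)) := by
        apply mul_le_mul_of_nonneg_left ht6 (by positivity)
      rw [ht7] at this
      have hui : u⁻¹ * u = 1 := inv_mul_cancel₀ hu.ne'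
      calc Real.exp 2 * u⁻¹ * (L:ℝ) ^ (-(2:ℝ)) ≤ Real.exp 2 * u⁻¹ * u := this
        _ = Real.exp 2 := by rw [mul_assoc, hui, mul_one]
    calc ∑' n : {n : ℕ // n ∉ range L},
          Real.exp (-u * (((n:ℕ):ℝ) + 1) ^ 2) * (((n:ℕ):ℝ) + 1) ^ (-(1:ℝ))
        ≤ (L:ℝ) ^ (-(1:ℝ)) * (1 - Real.exp (-(u * L)))⁻¹ := ht1
      _ ≤ (L:ℝ) ^ (-(1:ℝ)) * (Real.exp 2 * (u * L)⁻¹) := ht3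
      _ = Real.exp 2 * u⁻¹ * ((L:ℝ) ^ (-(1:ℝ)) * ((L:ℝ))⁻¹) := ht8
      _ ≤ Real.exp 2 := ht9
  have hlog3 : (0:ℝ) ≤ Real.log 3 := Real.log_nonneg (by norm_num)
  have he2 : (0:ℝ) < Real.exp 2 := Real.exp_pos 2
  nlinarith



-- abstract product summation
lemma aux_prod_sum {f : ℕ → ℝ} (hf : Summable f) (hpos : ∀ n, 0 ≤ f n) (c : ℝ) :
    Summable (fun p : ℕ × ℕ => c * (f p.1 * f p.2)) ∧
    ∑' p : ℕ × ℕ, c * (f p.1 * f p.2) = c * (∑' n, f n)^2 := by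
  have hprod : Summable (fun p : ℕ × ℕ => f p.1 * f p.2) :=
    Summable.mul_of_nonneg hf hf hpos hpos
  refine ⟨hprod.mul_left _, ?_⟩
  rw [tsum_mul_left]
  congr 1
  rw [Summable.tsum_prod' hprod (fun m => hf.mul_left (f m))]
  have h2 : ∀ m : ℕ, ∑' n : ℕ, f m * f n = f m * ∑' n, f n := fun m => tsum_mul_left
  rw [tsum_congr h2, tsum_mul_right, sq]

-- abstract triangular summation
lemma aux_tri {f h g : ℕ → ℝ} (hfpos : ∀ n, 0 ≤ f n) (hhpos : ∀ n, 0 ≤ h n)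
    (hgs : Summable g)
    (hbound : ∀ m, f m * ∑ n ∈ range (m+1), h n ≤ g m) :
    Summable (fun p : ℕ × ℕ => if p.2 ≤ p.1 then f p.1 * h p.2 else 0) ∧
    ∑' p : ℕ × ℕ, (if p.2 ≤ p.1 then f p.1 * h p.2 else 0) ≤ ∑' m, g m := by
  set φ : ℕ × ℕ → ℝ := fun p => if p.2 ≤ p.1 then f p.1 * h p.2 else 0 with hφ
  have hφpos : ∀ p, 0 ≤ φ p := by
    intro p
    rw [hφ]
    dsimp only
    split
    · exact mul_nonneg (hfpos _) (hhpos _)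
    · exact le_refl 0
  have hinner : ∀ m : ℕ, ∀ n : ℕ, n ∉ range (m+1) → φ (m, n) = 0 := by
    intro m n hn
    rw [Finset.mem_range, Nat.lt_add_one_iff] at hn
    rw [hφ]
    dsimp only
    rw [if_neg hn]
  have hinnersum : ∀ m : ℕ, Summable (fun n => φ (m, n)) :=
    fun m => summable_of_ne_finset_zero (hinner m)
  have htsum : ∀ m : ℕ, ∑' n, φ (m, n) = f m * ∑ n ∈ range (m+1), h n := by
    intro m
    rw [tsum_eq_sum (hinner m), Finset.mul_sum]
    apply Finset.sum_congr rfl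
    intro n hn
    rw [Finset.mem_range, Nat.lt_add_one_iff] at hn
    rw [hφ]
    dsimp only
    rw [if_pos hn]
  have houter : Summable (fun m => ∑' n, φ (m, n)) := by
    apply Summable.of_nonneg_of_le (fun m => tsum_nonneg (fun n => hφpos (m, n)))
      (fun m => ?_) hgs
    rw [htsum m]
    exact hbound m
  have hφs : Summable φ := by
    apply (summable_prod_of_nonneg hφpos).mpr
    exact ⟨hinnersum, houter⟩
  refine ⟨hφs, ?_⟩
  rw [Summable.tsum_prod' hφs hinnersum]
  apply Summable.tsum_le_tsum (fun m => ?_) houter hgs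
  rw [htsum m]
  exact hbound m

-- pointwise product majorant
lemma aux_pt_prod {u s : ℝ} (hs : 0 < s) (m n : ℕ) :
    Real.exp (-u * (((m:ℝ)+1)^2 + ((n:ℝ)+1)^2)) * (((m:ℝ)+1)^2 + ((n:ℝ)+1)^2) ^ (-s)
      ≤ (2:ℝ) ^ (-s) * (Real.exp (-u * ((m:ℝ)+1)^2) * ((m:ℝ)+1) ^ (-s)
          * (Real.exp (-u * ((n:ℝ)+1)^2) * ((n:ℝ)+1) ^ (-s))) := by
  set x := (m:ℝ)+1 with hx
  set y := (n:ℝ)+1 with hy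
  have hx0 : 0 < x := by have : (0:ℝ) ≤ (m:ℝ) := Nat.cast_nonneg m; simp [hx]; linarith
  have hy0 : 0 < y := by have : (0:ℝ) ≤ (n:ℝ) := Nat.cast_nonneg n; simp [hy]; linarith
  have hexp : Real.exp (-u * (x^2 + y^2))
      = Real.exp (-u * x^2) * Real.exp (-u * y^2) := by
    rw [← Real.exp_add]; ring_nf
  have hmul : (0:ℝ) < 2 * (x * y) := by positivity
  have hle : 2 * (x * y) ≤ x^2 + y^2 := by nlinarith [sq_nonneg (x - y)]
  have hrp : (x^2 + y^2) ^ (-s) ≤ (2 * (x * y)) ^ (-s) :=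
    Real.rpow_le_rpow_of_nonpos hmul hle (by linarith)
  have hfac : (2 * (x * y)) ^ (-s) = (2:ℝ) ^ (-s) * (x ^ (-s) * y ^ (-s)) := by
    rw [Real.mul_rpow (by norm_num) (by positivity), Real.mul_rpow hx0.le hy0.le]
  have hrw : (x^2 + y^2) ^ (-s) ≤ (2:ℝ) ^ (-s) * (x ^ (-s) * y ^ (-s)) := by
    rw [← hfac]; exact hrp
  have hepos : 0 < Real.exp (-u * (x^2+y^2)) := Real.exp_pos _
  calc Real.exp (-u * (x^2 + y^2)) * (x^2 + y^2) ^ (-s)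
      ≤ Real.exp (-u * (x^2 + y^2)) * ((2:ℝ) ^ (-s) * (x ^ (-s) * y ^ (-s))) :=
        mul_le_mul_of_nonneg_left hrw hepos.le
    _ = (2:ℝ) ^ (-s) * (Real.exp (-u * x^2) * x ^ (-s)
          * (Real.exp (-u * y^2) * y ^ (-s))) := by
        rw [hexp]; ring


-- pointwise bound for s = 1
lemma aux_pt_one {u : ℝ} (hu : 0 < u) (m n : ℕ) :
    Real.exp (-u * (((m:ℝ)+1)^2 + ((n:ℝ)+1)^2)) * (((m:ℝ)+1)^2 + ((n:ℝ)+1)^2) ^ (-(1:ℝ))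
      ≤ (if n ≤ m then (Real.exp (-u * ((m:ℝ)+1)^2) * ((m:ℝ)+1) ^ (-(3/2):ℝ))
            * ((n:ℝ)+1) ^ (-(1/2):ℝ) else 0)
        + (if m ≤ n then (Real.exp (-u * ((n:ℝ)+1)^2) * ((n:ℝ)+1) ^ (-(3/2):ℝ))
            * ((m:ℝ)+1) ^ (-(1/2):ℝ) else 0) := by
  have key : ∀ m n : ℕ, (n ≤ m) →
      Real.exp (-u * (((m:ℝ)+1)^2 + ((n:ℝ)+1)^2)) * (((m:ℝ)+1)^2 + ((n:ℝ)+1)^2) ^ (-(1:ℝ))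
        ≤ (Real.exp (-u * ((m:ℝ)+1)^2) * ((m:ℝ)+1) ^ (-(3/2):ℝ)) * ((n:ℝ)+1) ^ (-(1/2):ℝ) := by
    intro m n hnm
    set x := (m:ℝ)+1 with hxd
    set y := (n:ℝ)+1 with hyd
    have hx0 : 0 < x := by
      have : (0:ℝ) ≤ (m:ℝ) := Nat.cast_nonneg m
      rw [hxd]; linarith
    have hy0 : 0 < y := by
      have : (0:ℝ) ≤ (n:ℝ) := Nat.cast_nonneg n
      rw [hyd]; linarith
    have hyx : y ≤ x := by
      have : (n:ℝ) ≤ (m:ℝ) := Nat.cast_le.mpr hnm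
      rw [hxd, hyd]; linarith
    have hsum0 : (0:ℝ) < x^2 + y^2 := by positivity
    have hprod0 : (0:ℝ) < x ^ ((3/2):ℝ) * y ^ ((1/2):ℝ) := by positivity
    have hkey : x ^ ((3/2):ℝ) * y ^ ((1/2):ℝ) ≤ x^2 + y^2 := by
      have h1 : y ^ ((1/2):ℝ) ≤ x ^ ((1/2):ℝ) := Real.rpow_le_rpow hy0.le hyx (by norm_num)
      have h2 : x ^ ((3/2):ℝ) * y ^ ((1/2):ℝ) ≤ x ^ ((3/2):ℝ) * x ^ ((1/2):ℝ) :=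
        mul_le_mul_of_nonneg_left h1 (Real.rpow_pos_of_pos hx0 _).le
      have h3 : x ^ ((3/2):ℝ) * x ^ ((1/2):ℝ) = x ^ (2:ℕ) := by
        rw [← Real.rpow_add hx0, ← Real.rpow_natCast x 2]
        norm_num
      nlinarith [sq_nonneg y]
    have hinv : (x^2 + y^2) ^ (-(1:ℝ)) ≤ x ^ (-(3/2):ℝ) * y ^ (-(1/2):ℝ) := by
      rw [Real.rpow_neg_one]
      have h4 : (x^2 + y^2)⁻¹ ≤ (x ^ ((3/2):ℝ) * y ^ ((1/2):ℝ))⁻¹ := inv_anti₀ hprod0 hkey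
      have h5 : (x ^ ((3/2):ℝ) * y ^ ((1/2):ℝ))⁻¹ = x ^ (-(3/2):ℝ) * y ^ (-(1/2):ℝ) := by
        rw [mul_inv, ← Real.rpow_neg hx0.le, ← Real.rpow_neg hy0.le]
      rw [h5] at h4
      exact h4
    have hexp : Real.exp (-u * (x^2 + y^2)) ≤ Real.exp (-u * x^2) := by
      apply Real.exp_le_exp.mpr
      nlinarith [sq_nonneg y]
    calc Real.exp (-u * (x^2 + y^2)) * (x^2 + y^2) ^ (-(1:ℝ))
        ≤ Real.exp (-u * x^2) * (x ^ (-(3/2):ℝ) * y ^ (-(1/2):ℝ)) := by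
          apply mul_le_mul hexp hinv (Real.rpow_nonneg hsum0.le _) (Real.exp_pos _).le
      _ = (Real.exp (-u * x^2) * x ^ (-(3/2):ℝ)) * y ^ (-(1/2):ℝ) := by ring
  rcases le_total n m with hnm | hmn
  · rw [if_pos hnm]
    have h2 : (0:ℝ) ≤ (if m ≤ n then (Real.exp (-u * ((n:ℝ)+1)^2) * ((n:ℝ)+1) ^ (-(3/2):ℝ))
        * ((m:ℝ)+1) ^ (-(1/2):ℝ) else 0) := by
      split
      · positivity
      · exact le_refl 0
    have := key m n hnm
    linarith
  · rw [if_pos hmn]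
    have h2 : (0:ℝ) ≤ (if n ≤ m then (Real.exp (-u * ((m:ℝ)+1)^2) * ((m:ℝ)+1) ^ (-(3/2):ℝ))
        * ((n:ℝ)+1) ^ (-(1/2):ℝ) else 0) := by
      split
      · positivity
      · exact le_refl 0
    have := key n m hmn
    have hcomm : ((m:ℝ)+1)^2 + ((n:ℝ)+1)^2 = ((n:ℝ)+1)^2 + ((m:ℝ)+1)^2 := by ring
    rw [hcomm]
    linarith


-- transfer lemma
lemma aux_transfer (F : ℕ+ × ℕ+ → ℝ) (G : ℕ × ℕ → ℝ)
    (hFG : ∀ m n : ℕ, F (Nat.succPNat m, Nat.succPNat n) = G (m, n)) :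
    (Summable G ↔ Summable F) ∧ ∑' l, F l = ∑' p, G p := by
  set e2 : ℕ × ℕ ≃ ℕ+ × ℕ+ :=
    Equiv.prodCongr Equiv.pnatEquivNat.symm Equiv.pnatEquivNat.symm with he2
  have hcomp : F ∘ e2 = G := by
    funext p
    have h1 : e2 p = (Nat.succPNat p.1, Nat.succPNat p.2) := rfl
    rw [Function.comp_apply, h1, hFG]
  constructor
  · rw [← hcomp]
    exact e2.summable_iff
  · rw [← hcomp]
    exact (e2.tsum_eq F).symm

theorem stmt11 (s : ℝ) (hs : 0 < s) :
    ∃ C : ℝ, 0 < C ∧ ∀ u : ℝ, 0 < u → u ≤ 1 →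
      (Summable fun l : ℕ+ × ℕ+ =>
        Real.exp (-u * (((l.1 : ℕ) : ℝ) ^ 2 + ((l.2 : ℕ) : ℝ) ^ 2)) *
          (((l.1 : ℕ) : ℝ) ^ 2 + ((l.2 : ℕ) : ℝ) ^ 2) ^ (-s)) ∧
      (∑' l : ℕ+ × ℕ+,
          Real.exp (-u * (((l.1 : ℕ) : ℝ) ^ 2 + ((l.2 : ℕ) : ℝ) ^ 2)) *
            (((l.1 : ℕ) : ℝ) ^ 2 + ((l.2 : ℕ) : ℝ) ^ 2) ^ (-s))
        ≤ C * (if s < 1 then u ^ (s - 1) else if s = 1 then 1 - Real.log u else 1) := by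
  -- generic transfer and product bound, for all u
  have main : ∀ u : ℝ, 0 < u → u ≤ 1 →
      (Summable fun l : ℕ+ × ℕ+ =>
        Real.exp (-u * (((l.1 : ℕ) : ℝ) ^ 2 + ((l.2 : ℕ) : ℝ) ^ 2)) *
          (((l.1 : ℕ) : ℝ) ^ 2 + ((l.2 : ℕ) : ℝ) ^ 2) ^ (-s)) ∧
      (∑' l : ℕ+ × ℕ+,
          Real.exp (-u * (((l.1 : ℕ) : ℝ) ^ 2 + ((l.2 : ℕ) : ℝ) ^ 2)) *
            (((l.1 : ℕ) : ℝ) ^ 2 + ((l.2 : ℕ) : ℝ) ^ 2) ^ (-s))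
        = ∑' p : ℕ × ℕ, Real.exp (-u * (((p.1:ℝ)+1)^2 + ((p.2:ℝ)+1)^2)) *
            (((p.1:ℝ)+1)^2 + ((p.2:ℝ)+1)^2) ^ (-s) ∧
      (∑' p : ℕ × ℕ, Real.exp (-u * (((p.1:ℝ)+1)^2 + ((p.2:ℝ)+1)^2)) *
            (((p.1:ℝ)+1)^2 + ((p.2:ℝ)+1)^2) ^ (-s))
        ≤ (2:ℝ)^(-s) * (∑' n : ℕ, Real.exp (-u * ((n:ℝ)+1)^2) * ((n:ℝ)+1) ^ (-s))^2 := by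
    intro u hu hu1
    have hFG : ∀ m n : ℕ,
        (Real.exp (-u * (((Nat.succPNat m : ℕ) : ℝ) ^ 2 + ((Nat.succPNat n : ℕ) : ℝ) ^ 2)) *
          (((Nat.succPNat m : ℕ) : ℝ) ^ 2 + ((Nat.succPNat n : ℕ) : ℝ) ^ 2) ^ (-s))
        = Real.exp (-u * (((m:ℝ)+1)^2 + ((n:ℝ)+1)^2)) *
            (((m:ℝ)+1)^2 + ((n:ℝ)+1)^2) ^ (-s) := by
      intro m n
      have h1 : ((Nat.succPNat m : ℕ) : ℝ) = (m:ℝ)+1 := by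
        rw [Nat.succPNat_coe]
        push_cast
        ring
      have h2 : ((Nat.succPNat n : ℕ) : ℝ) = (n:ℝ)+1 := by
        rw [Nat.succPNat_coe]
        push_cast
        ring
      rw [h1, h2]
    obtain ⟨hiff, hteq⟩ := aux_transfer
      (fun l : ℕ+ × ℕ+ =>
        Real.exp (-u * (((l.1 : ℕ) : ℝ) ^ 2 + ((l.2 : ℕ) : ℝ) ^ 2)) *
          (((l.1 : ℕ) : ℝ) ^ 2 + ((l.2 : ℕ) : ℝ) ^ 2) ^ (-s))
      (fun p : ℕ × ℕ => Real.exp (-u * (((p.1:ℝ)+1)^2 + ((p.2:ℝ)+1)^2)) *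
            (((p.1:ℝ)+1)^2 + ((p.2:ℝ)+1)^2) ^ (-s))
      hFG
    have hg := aux_summable1 hu s hs.le
    have hgpos : ∀ n : ℕ, 0 ≤ Real.exp (-u * ((n:ℝ)+1)^2) * ((n:ℝ)+1) ^ (-s) :=
      fun n => by positivity
    obtain ⟨hMs, hMeq⟩ := aux_prod_sum hg hgpos ((2:ℝ)^(-s))
    have hGpos : ∀ p : ℕ × ℕ,
        0 ≤ Real.exp (-u * (((p.1:ℝ)+1)^2 + ((p.2:ℝ)+1)^2)) *
            (((p.1:ℝ)+1)^2 + ((p.2:ℝ)+1)^2) ^ (-s) := fun p => by positivity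
    have hGs : Summable (fun p : ℕ × ℕ =>
        Real.exp (-u * (((p.1:ℝ)+1)^2 + ((p.2:ℝ)+1)^2)) *
            (((p.1:ℝ)+1)^2 + ((p.2:ℝ)+1)^2) ^ (-s)) :=
      Summable.of_nonneg_of_le hGpos (fun p => aux_pt_prod hs p.1 p.2) hMs
    refine ⟨hiff.mp hGs, hteq, ?_⟩
    calc (∑' p : ℕ × ℕ, Real.exp (-u * (((p.1:ℝ)+1)^2 + ((p.2:ℝ)+1)^2)) *
            (((p.1:ℝ)+1)^2 + ((p.2:ℝ)+1)^2) ^ (-s))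
        ≤ ∑' p : ℕ × ℕ, (2:ℝ) ^ (-s) * (Real.exp (-u * ((p.1:ℝ)+1)^2) * ((p.1:ℝ)+1) ^ (-s)
            * (Real.exp (-u * ((p.2:ℝ)+1)^2) * ((p.2:ℝ)+1) ^ (-s))) :=
          Summable.tsum_le_tsum (fun p => aux_pt_prod hs p.1 p.2) hGs hMs
      _ = (2:ℝ)^(-s) * (∑' n : ℕ, Real.exp (-u * ((n:ℝ)+1)^2) * ((n:ℝ)+1) ^ (-s))^2 := hMeq
  rcases lt_trichotomy s 1 with hlt | heq | hgt
  · -- s < 1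
    have h1s : (0:ℝ) < 1 - s := by linarith
    have hK : (0:ℝ) < 8/(1-s) + Real.exp 2 :=
      add_pos (div_pos (by norm_num) h1s) (Real.exp_pos 2)
    refine ⟨(2:ℝ)^(-s) * (8/(1-s) + Real.exp 2)^2,
      mul_pos (Real.rpow_pos_of_pos two_pos _) (pow_pos hK 2), fun u hu hu1 => ?_⟩
    obtain ⟨hsumm, hteq, hbound⟩ := main u hu hu1
    refine ⟨hsumm, ?_⟩
    rw [hteq, if_pos hlt]
    have hS0 : (0:ℝ) ≤ ∑' n : ℕ, Real.exp (-u * ((n:ℝ)+1)^2) * ((n:ℝ)+1) ^ (-s) :=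
      tsum_nonneg (fun n => by positivity)
    have hSle := aux_oneDim_lt hs hlt hu hu1
    have hsq : (∑' n : ℕ, Real.exp (-u * ((n:ℝ)+1)^2) * ((n:ℝ)+1) ^ (-s))^2
        ≤ ((8/(1-s) + Real.exp 2) * u ^ ((s-1)/2))^2 :=
      pow_le_pow_left₀ hS0 hSle 2
    have hexp2 : ((8/(1-s) + Real.exp 2) * u ^ ((s-1)/2))^2
        = (8/(1-s) + Real.exp 2)^2 * u ^ (s-1) := by
      rw [mul_pow, sq (u ^ ((s-1)/2)), ← Real.rpow_add hu]
      ring_nf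
    have h2s : (0:ℝ) < (2:ℝ)^(-s) := Real.rpow_pos_of_pos two_pos _
    calc (∑' p : ℕ × ℕ, Real.exp (-u * (((p.1:ℝ)+1)^2 + ((p.2:ℝ)+1)^2)) *
            (((p.1:ℝ)+1)^2 + ((p.2:ℝ)+1)^2) ^ (-s))
        ≤ (2:ℝ)^(-s) * (∑' n : ℕ, Real.exp (-u * ((n:ℝ)+1)^2) * ((n:ℝ)+1) ^ (-s))^2 := hbound
      _ ≤ (2:ℝ)^(-s) * ((8/(1-s) + Real.exp 2)^2 * u ^ (s-1)) := by
          rw [← hexp2]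
          exact mul_le_mul_of_nonneg_left hsq h2s.le
      _ = (2:ℝ)^(-s) * (8/(1-s) + Real.exp 2)^2 * u ^ (s-1) := by ring
  · -- s = 1
    subst heq
    have hl3 : (0:ℝ) ≤ Real.log 3 := Real.log_nonneg (by norm_num)
    have he2 : (0:ℝ) < Real.exp 2 := Real.exp_pos 2
    refine ⟨8 * (2 * Real.log 3 + Real.exp 2 + 1), by nlinarith, fun u hu hu1 => ?_⟩
    obtain ⟨hsumm, hteq, _⟩ := main u hu hu1
    refine ⟨hsumm, ?_⟩
    rw [hteq, if_neg (lt_irrefl (1:ℝ)), if_pos rfl]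
    have hfpos : ∀ m : ℕ, 0 ≤ Real.exp (-u * ((m:ℝ)+1)^2) * ((m:ℝ)+1) ^ (-(3/2):ℝ) :=
      fun m => by positivity
    have hhpos : ∀ n : ℕ, 0 ≤ ((n:ℝ)+1) ^ (-(1/2):ℝ) := fun n => by positivity
    have hgs : Summable (fun m : ℕ =>
        4 * (Real.exp (-u * ((m:ℝ)+1)^2) * ((m:ℝ)+1) ^ (-(1:ℝ)))) :=
      (aux_summable1 hu 1 (by norm_num)).mul_left 4
    have hbound : ∀ m : ℕ,
        (Real.exp (-u * ((m:ℝ)+1)^2) * ((m:ℝ)+1) ^ (-(3/2):ℝ))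
          * ∑ n ∈ range (m+1), ((n:ℝ)+1) ^ (-(1/2):ℝ)
        ≤ 4 * (Real.exp (-u * ((m:ℝ)+1)^2) * ((m:ℝ)+1) ^ (-(1:ℝ))) := by
      intro m
      have hm : (0:ℝ) ≤ (m:ℝ) := Nat.cast_nonneg m
      have hx0 : (0:ℝ) < (m:ℝ)+1 := by linarith
      have hhead := aux_head_lt (show (0:ℝ) < 1/2 by norm_num)
        (show (1:ℝ)/2 < 1 by norm_num) (m+1)
      have hc : (((m+1:ℕ)):ℝ) = (m:ℝ)+1 := by push_cast; ring
      rw [hc] at hhead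
      rw [show (1:ℝ) - 1/2 = 1/2 by norm_num] at hhead
      rw [show (2:ℝ)/(1/2) = 4 by norm_num] at hhead
      have hfm : (0:ℝ) ≤ Real.exp (-u * ((m:ℝ)+1)^2) * ((m:ℝ)+1) ^ (-(3/2):ℝ) := hfpos m
      have h1 := mul_le_mul_of_nonneg_left hhead hfm
      have h2 : ((m:ℝ)+1) ^ (-(3/2):ℝ) * ((m:ℝ)+1) ^ ((1/2):ℝ) = ((m:ℝ)+1) ^ (-(1:ℝ)) := by
        rw [← Real.rpow_add hx0]
        norm_num
      calc (Real.exp (-u * ((m:ℝ)+1)^2) * ((m:ℝ)+1) ^ (-(3/2):ℝ))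
            * ∑ n ∈ range (m+1), ((n:ℝ)+1) ^ (-(1/2):ℝ)
          ≤ (Real.exp (-u * ((m:ℝ)+1)^2) * ((m:ℝ)+1) ^ (-(3/2):ℝ))
              * (4 * ((m:ℝ)+1) ^ ((1/2):ℝ)) := h1
        _ = 4 * (Real.exp (-u * ((m:ℝ)+1)^2)
              * (((m:ℝ)+1) ^ (-(3/2):ℝ) * ((m:ℝ)+1) ^ ((1/2):ℝ))) := by ring
        _ = 4 * (Real.exp (-u * ((m:ℝ)+1)^2) * ((m:ℝ)+1) ^ (-(1:ℝ))) := by rw [h2]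
    obtain ⟨hφs, hφle⟩ := aux_tri hfpos hhpos hgs hbound
    have hψs : Summable (fun p : ℕ × ℕ => if p.1 ≤ p.2 then
        (Real.exp (-u * ((p.2:ℝ)+1)^2) * ((p.2:ℝ)+1) ^ (-(3/2):ℝ))
          * ((p.1:ℝ)+1) ^ (-(1/2):ℝ) else 0) := by
      have hsw := ((Equiv.prodComm ℕ ℕ).summable_iff
        (f := fun p : ℕ × ℕ => if p.2 ≤ p.1 then
          (Real.exp (-u * ((p.1:ℝ)+1)^2) * ((p.1:ℝ)+1) ^ (-(3/2):ℝ))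
            * ((p.2:ℝ)+1) ^ (-(1/2):ℝ) else 0)).mpr hφs
      exact hsw.congr (fun p => rfl)
    have hψeq : (∑' p : ℕ × ℕ, (if p.1 ≤ p.2 then
          (Real.exp (-u * ((p.2:ℝ)+1)^2) * ((p.2:ℝ)+1) ^ (-(3/2):ℝ))
            * ((p.1:ℝ)+1) ^ (-(1/2):ℝ) else 0))
        = ∑' p : ℕ × ℕ, (if p.2 ≤ p.1 then
          (Real.exp (-u * ((p.1:ℝ)+1)^2) * ((p.1:ℝ)+1) ^ (-(3/2):ℝ))
            * ((p.2:ℝ)+1) ^ (-(1/2):ℝ) else 0) := by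
      rw [← (Equiv.prodComm ℕ ℕ).tsum_eq (fun p : ℕ × ℕ => if p.2 ≤ p.1 then
          (Real.exp (-u * ((p.1:ℝ)+1)^2) * ((p.1:ℝ)+1) ^ (-(3/2):ℝ))
            * ((p.2:ℝ)+1) ^ (-(1/2):ℝ) else 0)]
      exact tsum_congr (fun p => rfl)
    have hpt : ∀ p : ℕ × ℕ,
        Real.exp (-u * (((p.1:ℝ)+1)^2 + ((p.2:ℝ)+1)^2)) *
            (((p.1:ℝ)+1)^2 + ((p.2:ℝ)+1)^2) ^ (-(1:ℝ))
        ≤ (if p.2 ≤ p.1 then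
            (Real.exp (-u * ((p.1:ℝ)+1)^2) * ((p.1:ℝ)+1) ^ (-(3/2):ℝ))
              * ((p.2:ℝ)+1) ^ (-(1/2):ℝ) else 0)
          + (if p.1 ≤ p.2 then
            (Real.exp (-u * ((p.2:ℝ)+1)^2) * ((p.2:ℝ)+1) ^ (-(3/2):ℝ))
              * ((p.1:ℝ)+1) ^ (-(1/2):ℝ) else 0) :=
      fun p => aux_pt_one hu p.1 p.2
    have hG1pos : ∀ p : ℕ × ℕ,
        0 ≤ Real.exp (-u * (((p.1:ℝ)+1)^2 + ((p.2:ℝ)+1)^2)) *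
            (((p.1:ℝ)+1)^2 + ((p.2:ℝ)+1)^2) ^ (-(1:ℝ)) := fun p => by positivity
    have hsumsum := hφs.add hψs
    have hGs1 : Summable (fun p : ℕ × ℕ =>
        Real.exp (-u * (((p.1:ℝ)+1)^2 + ((p.2:ℝ)+1)^2)) *
            (((p.1:ℝ)+1)^2 + ((p.2:ℝ)+1)^2) ^ (-(1:ℝ))) :=
      Summable.of_nonneg_of_le hG1pos hpt hsumsum
    have hS1 := aux_oneDim_one hu hu1
    calc (∑' p : ℕ × ℕ, Real.exp (-u * (((p.1:ℝ)+1)^2 + ((p.2:ℝ)+1)^2)) *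
            (((p.1:ℝ)+1)^2 + ((p.2:ℝ)+1)^2) ^ (-(1:ℝ)))
        ≤ ∑' p : ℕ × ℕ, ((if p.2 ≤ p.1 then
            (Real.exp (-u * ((p.1:ℝ)+1)^2) * ((p.1:ℝ)+1) ^ (-(3/2):ℝ))
              * ((p.2:ℝ)+1) ^ (-(1/2):ℝ) else 0)
          + (if p.1 ≤ p.2 then
            (Real.exp (-u * ((p.2:ℝ)+1)^2) * ((p.2:ℝ)+1) ^ (-(3/2):ℝ))
              * ((p.1:ℝ)+1) ^ (-(1/2):ℝ) else 0)) :=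
          Summable.tsum_le_tsum hpt hGs1 hsumsum
      _ = (∑' p : ℕ × ℕ, (if p.2 ≤ p.1 then
            (Real.exp (-u * ((p.1:ℝ)+1)^2) * ((p.1:ℝ)+1) ^ (-(3/2):ℝ))
              * ((p.2:ℝ)+1) ^ (-(1/2):ℝ) else 0))
          + ∑' p : ℕ × ℕ, (if p.1 ≤ p.2 then
            (Real.exp (-u * ((p.2:ℝ)+1)^2) * ((p.2:ℝ)+1) ^ (-(3/2):ℝ))
              * ((p.1:ℝ)+1) ^ (-(1/2):ℝ) else 0) := Summable.tsum_add hφs hψs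
      _ = 2 * ∑' p : ℕ × ℕ, (if p.2 ≤ p.1 then
            (Real.exp (-u * ((p.1:ℝ)+1)^2) * ((p.1:ℝ)+1) ^ (-(3/2):ℝ))
              * ((p.2:ℝ)+1) ^ (-(1/2):ℝ) else 0) := by rw [hψeq]; ring
      _ ≤ 2 * ∑' m : ℕ, 4 * (Real.exp (-u * ((m:ℝ)+1)^2) * ((m:ℝ)+1) ^ (-(1:ℝ))) :=
          mul_le_mul_of_nonneg_left hφle (by norm_num)
      _ = 8 * ∑' m : ℕ, Real.exp (-u * ((m:ℝ)+1)^2) * ((m:ℝ)+1) ^ (-(1:ℝ)) := by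
          rw [tsum_mul_left]; ring
      _ ≤ 8 * ((2 * Real.log 3 + Real.exp 2 + 1) * (1 - Real.log u)) :=
          mul_le_mul_of_nonneg_left hS1 (by norm_num)
      _ = 8 * (2 * Real.log 3 + Real.exp 2 + 1) * (1 - Real.log u) := by ring
  · -- s > 1
    have hZs0 : Summable (fun n : ℕ => ((n:ℝ)) ^ (-s)) :=
      Real.summable_nat_rpow.mpr (by linarith)
    have hZs : Summable (fun n : ℕ => ((n:ℝ) + 1) ^ (-s)) := by
      have h1 := (summable_nat_add_iff 1).mpr hZs0
      apply h1.congr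
      intro n
      push_cast
      ring_nf
    set Z := ∑' n : ℕ, ((n:ℝ) + 1) ^ (-s) with hZ
    have hZ0 : 0 ≤ Z := tsum_nonneg (fun n => by positivity)
    have h2s : (0:ℝ) < (2:ℝ)^(-s) := Real.rpow_pos_of_pos two_pos _
    have hCpos : (0:ℝ) < (2:ℝ)^(-s) * Z^2 + 1 := by positivity
    refine ⟨(2:ℝ)^(-s) * Z^2 + 1, hCpos, fun u hu hu1 => ?_⟩
    obtain ⟨hsumm, hteq, hbound⟩ := main u hu hu1
    refine ⟨hsumm, ?_⟩
    rw [hteq, if_neg (by linarith : ¬ s < 1), if_neg (by linarith : ¬ s = 1)]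
    have hg := aux_summable1 hu s hs.le
    have hSle : (∑' n : ℕ, Real.exp (-u * ((n:ℝ)+1)^2) * ((n:ℝ)+1) ^ (-s)) ≤ Z := by
      apply Summable.tsum_le_tsum (fun n => ?_) hg hZs
      have hn : (0:ℝ) ≤ (n:ℝ) := Nat.cast_nonneg n
      have he : Real.exp (-u * ((n:ℝ) + 1) ^ 2) ≤ 1 := by
        apply Real.exp_le_one_iff.mpr
        nlinarith
      have hp : (0:ℝ) ≤ ((n:ℝ) + 1) ^ (-s) := by positivity
      nlinarith
    have hS0 : (0:ℝ) ≤ ∑' n : ℕ, Real.exp (-u * ((n:ℝ)+1)^2) * ((n:ℝ)+1) ^ (-s) :=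
      tsum_nonneg (fun n => by positivity)
    have hsq : (∑' n : ℕ, Real.exp (-u * ((n:ℝ)+1)^2) * ((n:ℝ)+1) ^ (-s))^2 ≤ Z^2 :=
      pow_le_pow_left₀ hS0 hSle 2
    have := mul_le_mul_of_nonneg_left hsq h2s.le
    have hfin := le_trans hbound this
    rw [mul_one]
    linarith
end

section
/- For every a ∈ (0,1) there exist constants 0 < c ≤ C such that for all ν ∈ (0,1) and all h ∈ (0,1]: c · ν^{a−1} h^{a} ≤ Σ_{l₁,l₂ ≥ 1} (l₁²+l₂²)^{−a} · min(1/(ν(l₁²+l₂²)), h) ≤ C · ν^{a−1} h^{a}. -/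
open Real Finset

private lemma bern_head {r x : ℝ} (hr : 0 < r) (hr1 : r ≤ 1) (hx : 1 ≤ x) :
    r * x ^ (r - 1) ≤ x ^ r - (x - 1) ^ r := by
  have hx0 : 0 < x := by linarith
  have hu1 : 1 / x ≤ 1 := by rw [div_le_one hx0]; exact hx
  have hu0 : 0 < 1 / x := by positivity
  have h1 : (x - 1) ^ r = x ^ r * (1 - 1 / x) ^ r := by
    have hxx : x - 1 = x * (1 - 1 / x) := by field_simp
    rw [hxx, mul_rpow hx0.le (by linarith)]
  have h2 : (1 - 1 / x) ^ r ≤ 1 - r * (1 / x) := by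
    have := rpow_one_add_le_one_add_mul_self (s := -(1 / x)) (by linarith) hr.le hr1
    rw [show (1 : ℝ) + -(1 / x) = 1 - 1 / x by ring] at this
    linarith [this]
  have h3 : x ^ (r - 1) = x ^ r * (1 / x) := by
    rw [rpow_sub hx0, rpow_one]; ring
  have hxr : (0 : ℝ) ≤ x ^ r := rpow_nonneg hx0.le r
  have key := mul_le_mul_of_nonneg_left h2 hxr
  rw [h1, h3]
  nlinarith [key]

private lemma head_range {b : ℝ} (hb : 0 < b) (hb1 : b < 1) (n : ℕ) :
    ∑ i ∈ range n, ((i : ℝ) + 1) ^ (-b) ≤ (1 / (1 - b)) * (n : ℝ) ^ (1 - b) := by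
  have hr : 0 < 1 - b := by linarith
  have step : ∀ i ∈ range n, ((i : ℝ) + 1) ^ (-b)
      ≤ (1 / (1 - b)) * ((((i : ℕ) + 1 : ℕ) : ℝ) ^ (1 - b) - ((i : ℕ) : ℝ) ^ (1 - b)) := by
    intro i _
    have h := bern_head hr (by linarith) (x := (i : ℝ) + 1) (by have h0 : (0:ℝ) ≤ i := Nat.cast_nonneg i; linarith)
    rw [show (1 : ℝ) - b - 1 = -b by ring, show ((i : ℝ) + 1 - 1) = (i : ℝ) by ring] at h
    have : ((i : ℝ) + 1) ^ (-b) = (1 / (1 - b)) * ((1 - b) * ((i : ℝ) + 1) ^ (-b)) := by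
      field_simp
    rw [this]
    have e : (((i : ℕ) + 1 : ℕ) : ℝ) = (i : ℝ) + 1 := by push_cast; ring
    rw [e]
    exact mul_le_mul_of_nonneg_left h (by positivity)
  calc ∑ i ∈ range n, ((i : ℝ) + 1) ^ (-b)
      ≤ ∑ i ∈ range n, (1 / (1 - b)) * ((((i : ℕ) + 1 : ℕ) : ℝ) ^ (1 - b) - ((i : ℕ) : ℝ) ^ (1 - b)) :=
        Finset.sum_le_sum step
    _ = (1 / (1 - b)) * ((n : ℝ) ^ (1 - b) - ((0 : ℕ) : ℝ) ^ (1 - b)) := by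
        rw [← Finset.mul_sum, Finset.sum_range_sub (fun i => ((i : ℕ) : ℝ) ^ (1 - b))]
    _ ≤ (1 / (1 - b)) * (n : ℝ) ^ (1 - b) := by
        rw [Nat.cast_zero, zero_rpow (by linarith : (1 : ℝ) - b ≠ 0)]
        apply mul_le_mul_of_nonneg_left _ (by positivity)
        linarith

private lemma bern_tail {q x : ℝ} (hq : 0 < q) (hx : 2 ≤ x) :
    q * x ^ (-1 - q) ≤ (x - 1) ^ (-q) - x ^ (-q) := by
  have hx0 : 0 < x := by linarith
  set u := 1 / x with hu
  have hu0 : 0 < u := by positivity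
  have hu2 : u ≤ 1 / 2 := by rw [hu, div_le_div_iff₀ hx0 two_pos]; linarith
  have h1u : 0 < 1 - u := by linarith
  have key : 1 + q * u ≤ (1 - u) ^ (-q) := by
    rcases le_or_gt q 1 with hq1 | hq1
    · have b1 : (1 - u) ^ q ≤ 1 - q * u := by
        have := rpow_one_add_le_one_add_mul_self (s := -u) (by linarith) hq.le hq1
        rw [show (1 : ℝ) + -u = 1 - u by ring] at this
        linarith [this]
      have hqu : 0 < 1 - q * u := by nlinarith
      have hp : 0 < (1 - u) ^ q := rpow_pos_of_pos h1u q
      rw [rpow_neg h1u.le]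
      have i1 : (1 - q * u)⁻¹ ≤ ((1 - u) ^ q)⁻¹ := by
        apply inv_anti₀ hp b1
      have i2 : 1 + q * u ≤ (1 - q * u)⁻¹ := by
        rw [inv_eq_one_div, le_div_iff₀ hqu]; nlinarith [sq_nonneg (q*u)]
      linarith
    · have hs : (0 : ℝ) ≤ u / (1 - u) := by positivity
      have b2 := one_add_mul_self_le_rpow_one_add (s := u / (1 - u)) (by linarith) hq1.le
      have e : (1 : ℝ) + u / (1 - u) = (1 - u)⁻¹ := by field_simp; ring
      rw [e] at b2
      rw [rpow_neg h1u.le, ← inv_rpow h1u.le]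
      refine le_trans ?_ b2
      have : u ≤ u / (1 - u) := by
        rw [le_div_iff₀ h1u]; nlinarith
      nlinarith
  have hxq : (0 : ℝ) ≤ x ^ (-q) := rpow_nonneg hx0.le _
  have h1 : (x - 1) ^ (-q) = x ^ (-q) * (1 - u) ^ (-q) := by
    have hxx : x - 1 = x * (1 - u) := by rw [hu]; field_simp
    rw [hxx, mul_rpow hx0.le h1u.le]
  have e3 : x ^ (-1 - q) = x ^ (-q) * u := by
    rw [hu, show -1 - q = -q - 1 by ring, rpow_sub hx0, rpow_one]; ring
  have key2 := mul_le_mul_of_nonneg_left key hxq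
  rw [h1, e3]
  nlinarith [key2]

private lemma tail_range {q : ℝ} (hq : 0 < q) {N : ℕ} (hN : 1 ≤ N) (n : ℕ) :
    ∑ i ∈ range n, ((N : ℝ) + i + 1) ^ (-1 - q) ≤ (1 / q) * (N : ℝ) ^ (-q) := by
  have hN1 : (1 : ℝ) ≤ (N : ℝ) := by exact_mod_cast hN
  have step : ∀ i ∈ range n, ((N : ℝ) + i + 1) ^ (-1 - q)
      ≤ (1 / q) * ((((N : ℕ) + i : ℕ) : ℝ) ^ (-q) - (((N : ℕ) + (i + 1) : ℕ) : ℝ) ^ (-q)) := by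
    intro i _
    have h := bern_tail hq (x := (N : ℝ) + i + 1) (by push_cast; linarith [Nat.cast_nonneg (α := ℝ) i])
    rw [show ((N : ℝ) + i + 1 - 1) = (N : ℝ) + i by ring] at h
    have e1 : (((N : ℕ) + i : ℕ) : ℝ) = (N : ℝ) + i := by push_cast; ring
    have e2 : (((N : ℕ) + (i + 1) : ℕ) : ℝ) = (N : ℝ) + i + 1 := by push_cast; ring
    rw [e1, e2]
    have : ((N : ℝ) + i + 1) ^ (-1 - q) = (1 / q) * (q * ((N : ℝ) + i + 1) ^ (-1 - q)) := by
      field_simp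
    rw [this]
    exact mul_le_mul_of_nonneg_left h (by positivity)
  calc ∑ i ∈ range n, ((N : ℝ) + i + 1) ^ (-1 - q)
      ≤ ∑ i ∈ range n, (1 / q) * ((((N : ℕ) + i : ℕ) : ℝ) ^ (-q) - (((N : ℕ) + (i + 1) : ℕ) : ℝ) ^ (-q)) :=
        Finset.sum_le_sum step
    _ = (1 / q) * ((((N : ℕ) + 0 : ℕ) : ℝ) ^ (-q) - (((N : ℕ) + n : ℕ) : ℝ) ^ (-q)) := by
        rw [← Finset.mul_sum, Finset.sum_range_sub' (fun i => (((N : ℕ) + i : ℕ) : ℝ) ^ (-q))]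
    _ ≤ (1 / q) * (N : ℝ) ^ (-q) := by
        apply mul_le_mul_of_nonneg_left _ (by positivity)
        simp only [Nat.add_zero]
        have : (0 : ℝ) ≤ (((N : ℕ) + n : ℕ) : ℝ) ^ (-q) := rpow_nonneg (by positivity) _
        linarith

private lemma summable_pnat_aux {p : ℝ} (hp : p < -1) :
    Summable (fun m : ℕ+ => ((m : ℕ) : ℝ) ^ p) := by
  have base : Summable (fun n : ℕ => (n : ℝ) ^ p) := Real.summable_nat_rpow.mpr hp
  have sh : Summable (fun i : ℕ => (((i + 1 : ℕ)) : ℝ) ^ p) := (summable_nat_add_iff 1).mpr base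
  apply (Equiv.pnatEquivNat.symm.summable_iff).mp
  convert sh using 2
  rfl

private lemma pnat_tsum_eq (g : ℕ+ → ℝ) : ∑' m : ℕ+, g m = ∑' i : ℕ, g i.succPNat := by
  exact (Equiv.pnatEquivNat.symm.tsum_eq g).symm

private lemma tail_tsum {q : ℝ} (hq : 0 < q) {s : ℝ} (hs : 0 < s) :
    (∑' m : ℕ+, if s < ((m : ℕ) : ℝ) then ((m : ℕ) : ℝ) ^ (-1 - q) else 0)
      ≤ (2 ^ q / q + (1 + 1 / q)) * s ^ (-q) := by
  have hspos : 0 < s ^ (-q) := rpow_pos_of_pos hs _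
  have base : Summable (fun i : ℕ => ((i : ℝ) + 1) ^ (-1 - q)) := by
    have b0 := Real.summable_nat_rpow.mpr (show -1 - q < -1 by linarith)
    have := (summable_nat_add_iff 1).mpr b0
    apply this.congr
    intro i; push_cast; ring_nf
  set H : ℕ → ℝ := fun i => if s < (i : ℝ) + 1 then ((i : ℝ) + 1) ^ (-1 - q) else 0 with hH
  have hH0 : ∀ i, 0 ≤ H i := by
    intro i; rw [hH]; dsimp only; split
    · positivity
    · exact le_rfl
  have hHle : ∀ i, H i ≤ ((i : ℝ) + 1) ^ (-1 - q) := by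
    intro i; rw [hH]; dsimp only; split
    · exact le_rfl
    · positivity
  have hHsum : Summable H := base.of_nonneg_of_le hH0 hHle
  have htrans : (∑' m : ℕ+, if s < ((m : ℕ) : ℝ) then ((m : ℕ) : ℝ) ^ (-1 - q) else 0)
      = ∑' i : ℕ, H i := by
    rw [pnat_tsum_eq]
    congr 1; funext i
    simp [hH, Nat.succPNat]
  rw [htrans]
  rcases le_or_gt 1 s with hs1 | hs1
  · -- s ≥ 1
    set N := ⌊s⌋₊ with hN
    have hN1 : 1 ≤ N := Nat.le_floor (by exact_mod_cast hs1)
    have hNs : (N : ℝ) ≤ s := Nat.floor_le hs.le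
    have hsN1 : s < (N : ℝ) + 1 := Nat.lt_floor_add_one s
    have hzero : ∀ i ∈ range N, H i = 0 := by
      intro i hi
      rw [hH]; dsimp only
      rw [if_neg]
      push_neg
      have : (i : ℝ) + 1 ≤ (N : ℝ) := by
        have : (i : ℕ) + 1 ≤ N := Finset.mem_range.mp hi
        exact_mod_cast this
      linarith
    have hsplit := (Summable.sum_add_tsum_nat_add N hHsum).symm
    rw [Finset.sum_eq_zero hzero, zero_add] at hsplit
    rw [hsplit]
    have hshift : Summable (fun i : ℕ => ((N : ℝ) + i + 1) ^ (-1 - q)) := by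
      have := (summable_nat_add_iff N).mpr base
      apply this.congr
      intro i; push_cast; ring_nf
    have hle2 : ∀ i : ℕ, H (i + N) ≤ ((N : ℝ) + i + 1) ^ (-1 - q) := by
      intro i
      have : ((i + N : ℕ) : ℝ) + 1 = (N : ℝ) + i + 1 := by push_cast; ring
      calc H (i + N) ≤ (((i + N : ℕ) : ℝ) + 1) ^ (-1 - q) := hHle _
        _ = ((N : ℝ) + i + 1) ^ (-1 - q) := by rw [this]
    have := Summable.tsum_le_tsum hle2 (hHsum.comp_injective (add_left_injective N)) hshift
    refine le_trans this ?_
    have hb := Real.tsum_le_of_sum_range_le (f := fun i : ℕ => ((N : ℝ) + i + 1) ^ (-1 - q))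
      (fun n => by positivity) (tail_range hq hN1)
    refine le_trans hb ?_
    have hN2 : s / 2 ≤ (N : ℝ) := by
      rcases le_total s 2 with h2 | h2
      · have : (1 : ℝ) ≤ (N : ℝ) := by exact_mod_cast hN1
        linarith
      · linarith
    have : (N : ℝ) ^ (-q) ≤ (s / 2) ^ (-q) :=
      rpow_le_rpow_of_nonpos (by linarith) hN2 (by linarith)
    have e : (s / 2) ^ (-q) = 2 ^ q * s ^ (-q) := by
      rw [div_rpow hs.le (by norm_num : (0:ℝ) ≤ 2), rpow_neg (by norm_num : (0:ℝ) ≤ 2)]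
      field_simp
    have h2q : (0:ℝ) < 2 ^ q := rpow_pos_of_pos (by norm_num) q
    calc 1 / q * (N : ℝ) ^ (-q) ≤ 1 / q * (2 ^ q * s ^ (-q)) := by
          apply mul_le_mul_of_nonneg_left _ (by positivity)
          rw [← e]; exact this
      _ = 2 ^ q / q * s ^ (-q) := by ring
      _ ≤ (2 ^ q / q + (1 + 1 / q)) * s ^ (-q) := by
          apply mul_le_mul_of_nonneg_right _ hspos.le
          have : 0 < 1 + 1/q := by positivity
          linarith
  · -- s < 1
    have hHle' := Summable.tsum_le_tsum hHle hHsum base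
    refine le_trans hHle' ?_
    have hsplit := (Summable.sum_add_tsum_nat_add 1 base).symm
    have h0 : ∑ i ∈ range 1, ((i : ℝ) + 1) ^ (-1 - q) = 1 := by
      simp [one_rpow]
    rw [h0] at hsplit
    rw [hsplit]
    have htail : (∑' i : ℕ, (((i + 1 : ℕ) : ℝ) + 1) ^ (-1 - q)) ≤ 1 / q := by
      apply Real.tsum_le_of_sum_range_le (fun n => by positivity)
      intro n
      have tr := tail_range hq (N := 1) le_rfl n
      rw [Nat.cast_one, one_rpow, mul_one] at tr
      refine le_trans (le_of_eq ?_) tr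
      apply Finset.sum_congr rfl
      intro i _
      push_cast
      ring_nf
    have hs' : 1 ≤ s ^ (-q) :=
      Real.one_le_rpow_of_pos_of_le_one_of_nonpos hs hs1.le (by linarith)
    have h2q : (0:ℝ) < 2 ^ q / q := by positivity
    have hfinal : (1:ℝ) + (∑' i : ℕ, (((i + 1 : ℕ) : ℝ) + 1) ^ (-1 - q)) ≤ 1 + 1 / q := by
      linarith
    refine le_trans hfinal ?_
    calc (1:ℝ) + 1 / q = (1 + 1 / q) * 1 := by ring
      _ ≤ (1 + 1 / q) * s ^ (-q) := mul_le_mul_of_nonneg_left hs' (by positivity)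
      _ ≤ (2 ^ q / q + (1 + 1 / q)) * s ^ (-q) := by
          apply mul_le_mul_of_nonneg_right _ hspos.le
          linarith

private lemma pnat_head_summable {b s : ℝ} (hs : 1 ≤ s) :
    Summable (fun m : ℕ+ => if ((m : ℕ) : ℝ) ≤ s then ((m : ℕ) : ℝ) ^ (-b) else 0) := by
  have hN1 : 1 ≤ ⌊s⌋₊ := Nat.le_floor (by exact_mod_cast hs)
  apply summable_of_ne_finset_zero (s := Finset.Icc 1 ⟨⌊s⌋₊, hN1⟩)
  intro m hm
  rw [if_neg]
  intro hle
  apply hm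
  refine Finset.mem_Icc.mpr ?_
  refine ⟨m.one_le, ?_⟩
  have : (m : ℕ) ≤ ⌊s⌋₊ := Nat.le_floor hle
  exact_mod_cast this

private lemma pnat_Icc_sum (F : ℕ+ → ℝ) (x : ℕ+) :
    ∑ m ∈ Finset.Icc 1 x, F m = ∑ i ∈ range (x : ℕ), F i.succPNat := by
  apply Finset.sum_nbij' (i := fun m => (m : ℕ+).natPred) (j := fun i => i.succPNat)
  · intro m hm
    rw [Finset.mem_Icc] at hm
    rw [Finset.mem_range]
    have h2 : (m : ℕ) ≤ (x : ℕ) := (PNat.coe_le_coe m x).mpr hm.2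
    have hp := m.pos
    have e : m.natPred = (m : ℕ) - 1 := rfl
    omega
  · intro i hi
    rw [Finset.mem_range] at hi
    rw [Finset.mem_Icc]
    constructor
    · exact i.succPNat.one_le
    · rw [← PNat.coe_le_coe, Nat.succPNat_coe]
      omega
  · intro m _; exact PNat.succPNat_natPred m
  · intro i _; exact Nat.natPred_succPNat i
  · intro m _; rw [PNat.succPNat_natPred]

private lemma pnat_head_tsum {b : ℝ} (hb : 0 < b) (hb1 : b < 1) {s : ℝ} (hs : 1 ≤ s) :
    (∑' m : ℕ+, if ((m : ℕ) : ℝ) ≤ s then ((m : ℕ) : ℝ) ^ (-b) else 0)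
      ≤ (1 / (1 - b)) * s ^ (1 - b) := by
  have hN1 : 1 ≤ ⌊s⌋₊ := Nat.le_floor (by exact_mod_cast hs)
  set x : ℕ+ := ⟨⌊s⌋₊, hN1⟩ with hx
  rw [tsum_eq_sum (s := Finset.Icc 1 x) ?_]
  · rw [pnat_Icc_sum]
    have step : ∀ i ∈ range (x : ℕ),
        (if ((i.succPNat : ℕ) : ℝ) ≤ s then ((i.succPNat : ℕ) : ℝ) ^ (-b) else 0)
          ≤ ((i : ℝ) + 1) ^ (-b) := by
      intro i _
      rw [Nat.succPNat_coe]
      push_cast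
      split
      · exact le_rfl
      · positivity
    refine le_trans (Finset.sum_le_sum step) ?_
    refine le_trans (head_range hb hb1 (x : ℕ)) ?_
    apply mul_le_mul_of_nonneg_left _ (one_div_nonneg.mpr (by linarith))
    apply rpow_le_rpow (Nat.cast_nonneg _) _ (by linarith)
    exact Nat.floor_le (by linarith)
  · intro m hm
    rw [if_neg]
    intro hle
    apply hm
    rw [Finset.mem_Icc]
    refine ⟨m.one_le, ?_⟩
    have : (m : ℕ) ≤ ⌊s⌋₊ := Nat.le_floor hle
    exact_mod_cast this

private lemma pnat_count_tsum (x : ℕ+) (c : ℝ) :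
    ∑' y : ℕ+, (if y ≤ x then c else 0) = ((x : ℕ) : ℝ) * c := by
  rw [tsum_eq_sum (s := Finset.Icc 1 x) ?_]
  · have : ∀ y ∈ Finset.Icc 1 x, (if y ≤ x then c else 0) = c := by
      intro y hy
      rw [if_pos (Finset.mem_Icc.mp hy).2]
    rw [Finset.sum_congr rfl this, Finset.sum_const, PNat.card_Icc]
    simp [nsmul_eq_mul]
  · intro y hy
    rw [if_neg]
    intro hle
    exact hy (Finset.mem_Icc.mpr ⟨y.one_le, hle⟩)

private lemma pnat_count_summable (x : ℕ+) (c : ℝ) :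
    Summable (fun y : ℕ+ => if y ≤ x then c else 0) := by
  apply summable_of_ne_finset_zero (s := Finset.Icc 1 x)
  intro y hy
  rw [if_neg]
  intro hle
  exact hy (Finset.mem_Icc.mpr ⟨y.one_le, hle⟩)

private lemma tsum_prod_mul {f g : ℕ+ → ℝ} (hf : Summable f) (hg : Summable g)
    (hf0 : ∀ m, 0 ≤ f m) (hg0 : ∀ m, 0 ≤ g m) :
    ∑' l : ℕ+ × ℕ+, f l.1 * g l.2 = (∑' m, f m) * (∑' m, g m) := by
  have hs : Summable (fun l : ℕ+ × ℕ+ => f l.1 * g l.2) := hf.mul_of_nonneg hg hf0 hg0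
  rw [Summable.tsum_prod' hs (fun x => hg.mul_left (f x))]
  simp_rw [tsum_mul_left]
  rw [tsum_mul_right]

private lemma idT {a ν h : ℝ} (hν : 0 < ν) (hh : 0 < h) :
    ((ν * h)⁻¹) ^ (1 - a) * h = ν ^ (a - 1) * h ^ a := by
  have hνh : 0 < ν * h := mul_pos hν hh
  rw [inv_rpow hνh.le, ← rpow_neg hνh.le, show -(1 - a) = a - 1 by ring,
    mul_rpow hν.le hh.le, mul_assoc, ← rpow_add_one hh.ne', show a - 1 + 1 = a by ring]

private lemma idT2 {a ν h : ℝ} (hν : 0 < ν) (hh : 0 < h) :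
    ν⁻¹ * ((ν * h)⁻¹) ^ (-a) = ν ^ (a - 1) * h ^ a := by
  have hνh : 0 < ν * h := mul_pos hν hh
  rw [inv_rpow hνh.le, rpow_neg hνh.le, inv_inv, mul_rpow hν.le hh.le,
    show a - 1 = a + (-1) by ring, rpow_add hν, rpow_neg_one]
  ring

private lemma pt_split {a ν h T x y : ℝ} (ha : 0 < a) (hν : 0 < ν) (hh : 0 < h)
    (hx1 : 1 ≤ x) (hy1 : 1 ≤ y) :
    (x ^ 2 + y ^ 2) ^ (-a) * min (1 / (ν * (x ^ 2 + y ^ 2))) h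
      ≤ (if x ^ 2 + y ^ 2 ≤ T then (x ^ 2 + y ^ 2) ^ (-a) * h else 0)
        + (if T < x ^ 2 + y ^ 2 then ν⁻¹ * (x ^ 2 + y ^ 2) ^ (-(a + 1)) else 0) := by
  have hn0 : (0 : ℝ) < x ^ 2 + y ^ 2 := by positivity
  rcases le_or_gt (x ^ 2 + y ^ 2) T with hc | hc
  · rw [if_pos hc, if_neg (not_lt.mpr hc), add_zero]
    exact mul_le_mul_of_nonneg_left (min_le_right _ _) (rpow_nonneg hn0.le _)
  · rw [if_neg (not_le.mpr hc), if_pos hc, zero_add]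
    have e1 : (x ^ 2 + y ^ 2) ^ (-a) * (1 / (ν * (x ^ 2 + y ^ 2)))
        = ν⁻¹ * (x ^ 2 + y ^ 2) ^ (-(a + 1)) := by
      rw [show -(a + 1) = -a + -1 by ring, rpow_add hn0, rpow_neg_one]
      field_simp
    calc (x ^ 2 + y ^ 2) ^ (-a) * min (1 / (ν * (x ^ 2 + y ^ 2))) h
        ≤ (x ^ 2 + y ^ 2) ^ (-a) * (1 / (ν * (x ^ 2 + y ^ 2))) :=
          mul_le_mul_of_nonneg_left (min_le_left _ _) (rpow_nonneg hn0.le _)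
      _ = ν⁻¹ * (x ^ 2 + y ^ 2) ^ (-(a + 1)) := e1

private lemma ptF {a ν h x y : ℝ} (ha : 0 < a) (hν : 0 < ν) (hh : 0 < h)
    (hx1 : 1 ≤ x) (hy1 : 1 ≤ y) :
    (x ^ 2 + y ^ 2) ^ (-a) * min (1 / (ν * (x ^ 2 + y ^ 2))) h
      ≤ ν⁻¹ * (x ^ (-(a + 1)) * y ^ (-(a + 1))) := by
  have hn0 : (0 : ℝ) < x ^ 2 + y ^ 2 := by positivity
  have hx0 : (0 : ℝ) < x := by linarith
  have hy0 : (0 : ℝ) < y := by linarith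
  have e1 : (x ^ 2 + y ^ 2) ^ (-a) * (1 / (ν * (x ^ 2 + y ^ 2)))
      = ν⁻¹ * (x ^ 2 + y ^ 2) ^ (-(a + 1)) := by
    rw [show -(a + 1) = -a + -1 by ring, rpow_add hn0, rpow_neg_one]
    field_simp
  calc (x ^ 2 + y ^ 2) ^ (-a) * min (1 / (ν * (x ^ 2 + y ^ 2))) h
      ≤ (x ^ 2 + y ^ 2) ^ (-a) * (1 / (ν * (x ^ 2 + y ^ 2))) :=
        mul_le_mul_of_nonneg_left (min_le_left _ _) (rpow_nonneg hn0.le _)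
    _ = ν⁻¹ * (x ^ 2 + y ^ 2) ^ (-(a + 1)) := e1
    _ ≤ ν⁻¹ * ((x * y) ^ (-(a + 1))) := by
        apply mul_le_mul_of_nonneg_left _ (inv_nonneg.mpr hν.le)
        exact rpow_le_rpow_of_nonpos (by positivity) (by nlinarith) (by linarith)
    _ = ν⁻¹ * (x ^ (-(a + 1)) * y ^ (-(a + 1))) := by rw [mul_rpow hx0.le hy0.le]

private lemma pt_head {a ν h T x y : ℝ} (ha : 0 < a) (hν : 0 < ν) (hh : 0 < h)
    (hT0 : 0 < T) (hx1 : 1 ≤ x) (hy1 : 1 ≤ y) :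
    (if x ^ 2 + y ^ 2 ≤ T then (x ^ 2 + y ^ 2) ^ (-a) * h else 0)
      ≤ h * ((if x ≤ Real.sqrt T then x ^ (-a) else 0)
          * (if y ≤ Real.sqrt T then y ^ (-a) else 0)) := by
  have hx0 : (0 : ℝ) < x := by linarith
  have hy0 : (0 : ℝ) < y := by linarith
  rcases le_or_gt (x ^ 2 + y ^ 2) T with hc | hc
  · rw [if_pos hc]
    have hxs : x ≤ Real.sqrt T := by
      have h2 : x ^ 2 ≤ T := by nlinarith
      have h3 := Real.sqrt_le_sqrt h2
      rwa [Real.sqrt_sq hx0.le] at h3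
    have hys : y ≤ Real.sqrt T := by
      have h2 : y ^ 2 ≤ T := by nlinarith
      have h3 := Real.sqrt_le_sqrt h2
      rwa [Real.sqrt_sq hy0.le] at h3
    rw [if_pos hxs, if_pos hys]
    have hb : (x ^ 2 + y ^ 2) ^ (-a) ≤ x ^ (-a) * y ^ (-a) := by
      rw [← mul_rpow hx0.le hy0.le]
      exact rpow_le_rpow_of_nonpos (by positivity) (by nlinarith) (by linarith)
    calc (x ^ 2 + y ^ 2) ^ (-a) * h ≤ (x ^ (-a) * y ^ (-a)) * h :=
          mul_le_mul_of_nonneg_right hb hh.le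
      _ = h * (x ^ (-a) * y ^ (-a)) := by ring
  · rw [if_neg (not_le.mpr hc)]
    apply mul_nonneg hh.le
    apply mul_nonneg <;> · split <;> positivity

private lemma pt_tail {a ν T x y : ℝ} (ha : 0 < a) (hν : 0 < ν) (hT0 : 0 < T)
    (hx1 : 1 ≤ x) (hy1 : 1 ≤ y) :
    (if T < x ^ 2 + y ^ 2 then ν⁻¹ * (x ^ 2 + y ^ 2) ^ (-(a + 1)) else 0)
      ≤ (if Real.sqrt (T / 2) < x ∧ y ≤ x then ν⁻¹ * x ^ (-2 * (a + 1)) else 0)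
        + (if Real.sqrt (T / 2) < y ∧ x ≤ y then ν⁻¹ * y ^ (-2 * (a + 1)) else 0) := by
  have hx0 : (0 : ℝ) < x := by linarith
  have hy0 : (0 : ℝ) < y := by linarith
  have hB1 : (0 : ℝ) ≤ (if Real.sqrt (T / 2) < x ∧ y ≤ x then ν⁻¹ * x ^ (-2 * (a + 1)) else 0) := by
    split <;> positivity
  have hB2 : (0 : ℝ) ≤ (if Real.sqrt (T / 2) < y ∧ x ≤ y then ν⁻¹ * y ^ (-2 * (a + 1)) else 0) := by
    split <;> positivity
  rcases le_or_gt (x ^ 2 + y ^ 2) T with hc | hc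
  · rw [if_neg (not_lt.mpr hc)]
    exact add_nonneg hB1 hB2
  · rw [if_pos hc]
    have key : ∀ u v : ℝ, 1 ≤ u → 1 ≤ v → v ≤ u → T < u ^ 2 + v ^ 2 →
        ν⁻¹ * (u ^ 2 + v ^ 2) ^ (-(a + 1))
          ≤ (if Real.sqrt (T / 2) < u ∧ v ≤ u then ν⁻¹ * u ^ (-2 * (a + 1)) else 0) := by
      intro u v hu1 hv1 hvu hT'
      have hu0 : (0 : ℝ) < u := by linarith
      have hsu : Real.sqrt (T / 2) < u := by
        have h2 : T / 2 < u ^ 2 := by nlinarith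
        have := Real.sqrt_lt_sqrt (by positivity) h2
        rwa [Real.sqrt_sq hu0.le] at this
      rw [if_pos ⟨hsu, hvu⟩]
      apply mul_le_mul_of_nonneg_left _ (inv_nonneg.mpr hν.le)
      have h1 : (u ^ 2) ^ (-(a + 1)) = u ^ (-2 * (a + 1)) := by
        rw [← rpow_natCast u 2, ← rpow_mul hu0.le]
        congr 1
        push_cast
        ring
      rw [← h1]
      exact rpow_le_rpow_of_nonpos (by positivity) (by nlinarith) (by linarith)
    rcases le_total y x with hyx | hxy
    · have := key x y hx1 hy1 hyx hc
      linarith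
    · have hk := key y x hy1 hx1 hxy (by nlinarith)
      rw [show y ^ 2 + x ^ 2 = x ^ 2 + y ^ 2 by ring] at hk
      linarith

private lemma pt_KM {a ν s₂ x y : ℝ} (ha : 0 < a) (hν : 0 < ν)
    (hx1 : 1 ≤ x) (hy1 : 1 ≤ y) :
    (if s₂ < x ∧ y ≤ x then ν⁻¹ * x ^ (-2 * (a + 1)) else 0)
      ≤ ν⁻¹ * (x ^ (-(a + 1)) * y ^ (-(a + 1))) := by
  have hx0 : (0 : ℝ) < x := by linarith
  have hy0 : (0 : ℝ) < y := by linarith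
  split
  case isTrue hcc =>
    apply mul_le_mul_of_nonneg_left _ (inv_nonneg.mpr hν.le)
    have e : x ^ (-2 * (a + 1)) = x ^ (-(a + 1)) * x ^ (-(a + 1)) := by
      rw [← rpow_add hx0]; congr 1; ring
    rw [e]
    apply mul_le_mul_of_nonneg_left _ (rpow_nonneg hx0.le _)
    exact rpow_le_rpow_of_nonpos hy0 hcc.2 (by linarith)
  case isFalse => positivity

private lemma pt_g2M {a ν T x y : ℝ} (ha : 0 < a) (hν : 0 < ν)
    (hx1 : 1 ≤ x) (hy1 : 1 ≤ y) :
    (if T < x ^ 2 + y ^ 2 then ν⁻¹ * (x ^ 2 + y ^ 2) ^ (-(a + 1)) else 0)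
      ≤ ν⁻¹ * (x ^ (-(a + 1)) * y ^ (-(a + 1))) := by
  have hx0 : (0 : ℝ) < x := by linarith
  have hy0 : (0 : ℝ) < y := by linarith
  split
  · apply mul_le_mul_of_nonneg_left _ (inv_nonneg.mpr hν.le)
    rw [← mul_rpow hx0.le hy0.le]
    exact rpow_le_rpow_of_nonpos (by positivity) (by nlinarith) (by linarith)
  · positivity

set_option maxHeartbeats 2000000 in
private lemma upper_main (a : ℝ) (ha : 0 < a) (ha1 : a < 1) {ν h : ℝ}
    (hν : 0 < ν) (hν1 : ν < 1) (hh : 0 < h) (hh1 : h ≤ 1) :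
    Summable (fun l : ℕ+ × ℕ+ =>
        (((l.1 : ℕ) : ℝ) ^ 2 + ((l.2 : ℕ) : ℝ) ^ 2) ^ (-a) *
          min (1 / (ν * (((l.1 : ℕ) : ℝ) ^ 2 + ((l.2 : ℕ) : ℝ) ^ 2))) h) ∧
    (∑' l : ℕ+ × ℕ+,
        (((l.1 : ℕ) : ℝ) ^ 2 + ((l.2 : ℕ) : ℝ) ^ 2) ^ (-a) *
          min (1 / (ν * (((l.1 : ℕ) : ℝ) ^ 2 + ((l.2 : ℕ) : ℝ) ^ 2))) h)
      ≤ ((1 / (1 - a)) ^ 2 + 2 * ((2 ^ (2 * a) / (2 * a) + (1 + 1 / (2 * a))) * 2 ^ a))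
          * (ν ^ (a - 1) * h ^ a) := by
  have hνh : 0 < ν * h := mul_pos hν hh
  have hνh1 : ν * h < 1 := by nlinarith
  have hone : ∀ m : ℕ+, (1 : ℝ) ≤ ((m : ℕ) : ℝ) := by
    intro m; exact_mod_cast m.one_le
  set T : ℝ := (ν * h)⁻¹ with hT
  have hT1 : 1 < T := by
    rw [hT]; nlinarith [mul_inv_cancel₀ hνh.ne', inv_pos.mpr hνh]
  have hT0 : 0 < T := by linarith
  set s₁ : ℝ := Real.sqrt T with hs1def
  have hs₁1 : 1 ≤ s₁ := by
    rw [hs1def, show (1 : ℝ) = Real.sqrt 1 from Real.sqrt_one.symm]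
    exact Real.sqrt_le_sqrt (by linarith)
  set s₂ : ℝ := Real.sqrt (T / 2) with hs2def
  have hs₂0 : 0 < s₂ := Real.sqrt_pos.mpr (by linarith)
  have hpn := summable_pnat_aux (show -(a + 1) < -1 by linarith)
  have hpn0 : ∀ m : ℕ+, 0 ≤ ((m : ℕ) : ℝ) ^ (-(a + 1)) :=
    fun m => rpow_nonneg (Nat.cast_nonneg _) _
  have hMsum : Summable (fun l : ℕ+ × ℕ+ =>
      ν⁻¹ * (((l.1 : ℕ) : ℝ) ^ (-(a + 1)) * ((l.2 : ℕ) : ℝ) ^ (-(a + 1)))) :=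
    (hpn.mul_of_nonneg hpn hpn0 hpn0).mul_left ν⁻¹
  have hF0 : ∀ l : ℕ+ × ℕ+, 0 ≤ (((l.1 : ℕ) : ℝ) ^ 2 + ((l.2 : ℕ) : ℝ) ^ 2) ^ (-a) *
      min (1 / (ν * (((l.1 : ℕ) : ℝ) ^ 2 + ((l.2 : ℕ) : ℝ) ^ 2))) h := by
    intro l
    have h1 := hone l.1
    have h2 := hone l.2
    apply mul_nonneg (rpow_nonneg (by positivity) _)
    exact le_min (by positivity) hh.le
  have hFM : ∀ l : ℕ+ × ℕ+, (((l.1 : ℕ) : ℝ) ^ 2 + ((l.2 : ℕ) : ℝ) ^ 2) ^ (-a) *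
      min (1 / (ν * (((l.1 : ℕ) : ℝ) ^ 2 + ((l.2 : ℕ) : ℝ) ^ 2))) h
      ≤ ν⁻¹ * (((l.1 : ℕ) : ℝ) ^ (-(a + 1)) * ((l.2 : ℕ) : ℝ) ^ (-(a + 1))) :=
    fun l => ptF ha hν hh (hone l.1) (hone l.2)
  have hFsum : Summable (fun l : ℕ+ × ℕ+ =>
      (((l.1 : ℕ) : ℝ) ^ 2 + ((l.2 : ℕ) : ℝ) ^ 2) ^ (-a) *
        min (1 / (ν * (((l.1 : ℕ) : ℝ) ^ 2 + ((l.2 : ℕ) : ℝ) ^ 2))) h) :=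
    Summable.of_nonneg_of_le hF0 hFM hMsum
  refine ⟨hFsum, ?_⟩
  set g1 : ℕ+ × ℕ+ → ℝ := fun l =>
    if (((l.1 : ℕ) : ℝ) ^ 2 + ((l.2 : ℕ) : ℝ) ^ 2) ≤ T
      then (((l.1 : ℕ) : ℝ) ^ 2 + ((l.2 : ℕ) : ℝ) ^ 2) ^ (-a) * h else 0 with hg1
  set g2 : ℕ+ × ℕ+ → ℝ := fun l =>
    if T < (((l.1 : ℕ) : ℝ) ^ 2 + ((l.2 : ℕ) : ℝ) ^ 2)
      then ν⁻¹ * (((l.1 : ℕ) : ℝ) ^ 2 + ((l.2 : ℕ) : ℝ) ^ 2) ^ (-(a + 1)) else 0 with hg2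
  have hsplit : ∀ l : ℕ+ × ℕ+,
      (((l.1 : ℕ) : ℝ) ^ 2 + ((l.2 : ℕ) : ℝ) ^ 2) ^ (-a) *
        min (1 / (ν * (((l.1 : ℕ) : ℝ) ^ 2 + ((l.2 : ℕ) : ℝ) ^ 2))) h ≤ g1 l + g2 l :=
    fun l => pt_split ha hν hh (hone l.1) (hone l.2)
  have hg10 : ∀ l, 0 ≤ g1 l := by
    intro l; rw [hg1]; dsimp only; split
    · have h1 := hone l.1; have h2 := hone l.2
      positivity
    · exact le_rfl
  have hg1F : ∀ l : ℕ+ × ℕ+, g1 l ≤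
      (((l.1 : ℕ) : ℝ) ^ 2 + ((l.2 : ℕ) : ℝ) ^ 2) ^ (-a) *
        min (1 / (ν * (((l.1 : ℕ) : ℝ) ^ 2 + ((l.2 : ℕ) : ℝ) ^ 2))) h := by
    intro l; rw [hg1]; dsimp only
    have h1 := hone l.1; have h2 := hone l.2
    split
    case isTrue hc =>
      have hn0 : (0 : ℝ) < ((l.1 : ℕ) : ℝ) ^ 2 + ((l.2 : ℕ) : ℝ) ^ 2 := by positivity
      have hn1 : (((l.1 : ℕ) : ℝ) ^ 2 + ((l.2 : ℕ) : ℝ) ^ 2) * (ν * h) ≤ 1 := by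
        have := mul_le_mul_of_nonneg_right hc hνh.le
        rwa [inv_mul_cancel₀ hνh.ne'] at this
      have hmin : h ≤ min (1 / (ν * (((l.1 : ℕ) : ℝ) ^ 2 + ((l.2 : ℕ) : ℝ) ^ 2))) h := by
        apply le_min _ le_rfl
        rw [le_div_iff₀ (by positivity)]
        nlinarith
      exact mul_le_mul_of_nonneg_left hmin (rpow_nonneg hn0.le _)
    case isFalse => exact hF0 l
  have hg1sum : Summable g1 := Summable.of_nonneg_of_le hg10 hg1F hFsum
  have hg20 : ∀ l, 0 ≤ g2 l := by
    intro l; rw [hg2]; dsimp only; split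
    · have h1 := hone l.1; have h2 := hone l.2
      have hn0 : (0 : ℝ) < ((l.1 : ℕ) : ℝ) ^ 2 + ((l.2 : ℕ) : ℝ) ^ 2 := by positivity
      exact mul_nonneg (inv_nonneg.mpr hν.le) (rpow_nonneg hn0.le _)
    · exact le_rfl
  have hg2M : ∀ l : ℕ+ × ℕ+, g2 l ≤
      ν⁻¹ * (((l.1 : ℕ) : ℝ) ^ (-(a + 1)) * ((l.2 : ℕ) : ℝ) ^ (-(a + 1))) :=
    fun l => pt_g2M ha hν (hone l.1) (hone l.2)
  have hg2sum : Summable g2 := Summable.of_nonneg_of_le hg20 hg2M hMsum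
  have hstep1 : (∑' l : ℕ+ × ℕ+,
      (((l.1 : ℕ) : ℝ) ^ 2 + ((l.2 : ℕ) : ℝ) ^ 2) ^ (-a) *
        min (1 / (ν * (((l.1 : ℕ) : ℝ) ^ 2 + ((l.2 : ℕ) : ℝ) ^ 2))) h)
      ≤ (∑' l, g1 l) + ∑' l, g2 l := by
    refine le_trans (Summable.tsum_le_tsum hsplit hFsum (hg1sum.add hg2sum)) ?_
    rw [Summable.tsum_add hg1sum hg2sum]
  -- head piece
  set I : ℕ+ → ℝ := fun m => if ((m : ℕ) : ℝ) ≤ s₁ then ((m : ℕ) : ℝ) ^ (-a) else 0 with hI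
  have hI0 : ∀ m, 0 ≤ I m := by
    intro m; rw [hI]; dsimp only; split
    · positivity
    · exact le_rfl
  have hIsum : Summable I := pnat_head_summable hs₁1
  have hG1sum : Summable (fun l : ℕ+ × ℕ+ => h * (I l.1 * I l.2)) :=
    (hIsum.mul_of_nonneg hIsum hI0 hI0).mul_left h
  have hg1G : ∀ l : ℕ+ × ℕ+, g1 l ≤ h * (I l.1 * I l.2) :=
    fun l => pt_head ha hν hh hT0 (hone l.1) (hone l.2)
  have hIb : (∑' m, I m) ≤ (1 / (1 - a)) * s₁ ^ (1 - a) := pnat_head_tsum ha ha1 hs₁1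
  have hs1sq : s₁ ^ (1 - a) * s₁ ^ (1 - a) = T ^ (1 - a) := by
    rw [← rpow_add (by linarith : (0:ℝ) < s₁), hs1def, Real.sqrt_eq_rpow, ← rpow_mul hT0.le]
    congr 1; ring
  have hB0 : (0 : ℝ) ≤ (1 / (1 - a)) * s₁ ^ (1 - a) :=
    mul_nonneg (one_div_nonneg.mpr (by linarith)) (rpow_nonneg (by linarith) _)
  have hhead : (∑' l, g1 l) ≤ (1 / (1 - a)) ^ 2 * (ν ^ (a - 1) * h ^ a) := by
    calc (∑' l, g1 l) ≤ ∑' l : ℕ+ × ℕ+, h * (I l.1 * I l.2) :=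
          Summable.tsum_le_tsum hg1G hg1sum hG1sum
      _ = h * ((∑' m, I m) * (∑' m, I m)) := by
          rw [tsum_mul_left, tsum_prod_mul hIsum hIsum hI0 hI0]
      _ ≤ h * (((1 / (1 - a)) * s₁ ^ (1 - a)) * ((1 / (1 - a)) * s₁ ^ (1 - a))) := by
          apply mul_le_mul_of_nonneg_left _ hh.le
          exact mul_le_mul hIb hIb (tsum_nonneg hI0) hB0
      _ = (1 / (1 - a)) ^ 2 * (T ^ (1 - a) * h) := by
          rw [← hs1sq]; ring
      _ = (1 / (1 - a)) ^ 2 * (ν ^ (a - 1) * h ^ a) := by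
          rw [hT, idT hν hh]
  -- tail piece
  set Kf : ℕ+ → ℕ+ → ℝ := fun m k =>
    if s₂ < ((m : ℕ) : ℝ) ∧ ((k : ℕ) : ℝ) ≤ ((m : ℕ) : ℝ)
      then ν⁻¹ * ((m : ℕ) : ℝ) ^ (-2 * (a + 1)) else 0 with hKf
  have hK0 : ∀ m k, 0 ≤ Kf m k := by
    intro m k; rw [hKf]; dsimp only; split
    · exact mul_nonneg (inv_nonneg.mpr hν.le) (rpow_nonneg (Nat.cast_nonneg _) _)
    · exact le_rfl
  have hKM : ∀ l : ℕ+ × ℕ+, Kf l.1 l.2 ≤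
      ν⁻¹ * (((l.1 : ℕ) : ℝ) ^ (-(a + 1)) * ((l.2 : ℕ) : ℝ) ^ (-(a + 1))) :=
    fun l => pt_KM ha hν (hone l.1) (hone l.2)
  have hKsum : Summable (fun l : ℕ+ × ℕ+ => Kf l.1 l.2) :=
    Summable.of_nonneg_of_le (fun l => hK0 _ _) hKM hMsum
  have hKsum2 : Summable (fun l : ℕ+ × ℕ+ => Kf l.2 l.1) :=
    (Equiv.prodComm ℕ+ ℕ+).summable_iff.mpr hKsum
  have hg2K : ∀ l : ℕ+ × ℕ+, g2 l ≤ Kf l.1 l.2 + Kf l.2 l.1 :=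
    fun l => pt_tail ha hν hT0 (hone l.1) (hone l.2)
  have hswap : (∑' l : ℕ+ × ℕ+, Kf l.2 l.1) = ∑' l : ℕ+ × ℕ+, Kf l.1 l.2 :=
    (Equiv.prodComm ℕ+ ℕ+).tsum_eq (fun l : ℕ+ × ℕ+ => Kf l.1 l.2)
  have hinnersum : ∀ m : ℕ+, Summable (fun k : ℕ+ => Kf m k) := by
    intro m
    apply summable_of_ne_finset_zero (s := Finset.Icc 1 m)
    intro k hk
    rw [hKf]; dsimp only
    rw [if_neg]
    rintro ⟨-, hr⟩
    apply hk
    apply Finset.mem_Icc.mpr ⟨k.one_le, ?_⟩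
    exact_mod_cast hr
  have hinner : ∀ m : ℕ+, (∑' k : ℕ+, Kf m k)
      = ν⁻¹ * (if s₂ < ((m : ℕ) : ℝ) then ((m : ℕ) : ℝ) ^ (-1 - 2 * a) else 0) := by
    intro m
    by_cases hc : s₂ < ((m : ℕ) : ℝ)
    · have e1 : ∀ k : ℕ+, Kf m k =
          (if k ≤ m then ν⁻¹ * ((m : ℕ) : ℝ) ^ (-2 * (a + 1)) else 0) := by
        intro k
        rw [hKf]; dsimp only
        apply if_congr _ rfl rfl
        rw [and_iff_right hc]
        constructor
        · intro hr; exact_mod_cast hr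
        · intro hp; exact_mod_cast hp
      rw [tsum_congr e1, pnat_count_tsum m _, if_pos hc]
      rw [show (-1 - 2 * a) = 1 + (-2 * (a + 1)) by ring,
        rpow_one_add' (Nat.cast_nonneg _) (ne_of_lt (by nlinarith))]
      ring
    · have e1 : ∀ k : ℕ+, Kf m k = 0 := by
        intro k; rw [hKf]; dsimp only; rw [if_neg]
        rintro ⟨hcc, -⟩; exact hc hcc
      rw [tsum_congr e1, tsum_zero, if_neg hc, mul_zero]
  have hKeval : (∑' l : ℕ+ × ℕ+, Kf l.1 l.2)
      = ν⁻¹ * (∑' m : ℕ+, if s₂ < ((m : ℕ) : ℝ) then ((m : ℕ) : ℝ) ^ (-1 - 2 * a) else 0) := by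
    rw [Summable.tsum_prod' hKsum hinnersum, tsum_congr hinner, tsum_mul_left]
  have htails := tail_tsum (show (0:ℝ) < 2 * a by linarith) hs₂0
  have hs2pow : s₂ ^ (-(2 * a)) = 2 ^ a * T ^ (-a) := by
    rw [hs2def, Real.sqrt_eq_rpow, ← rpow_mul (by linarith : (0:ℝ) ≤ T / 2),
      show (1 / 2) * (-(2 * a)) = -a by ring,
      div_rpow hT0.le (by norm_num : (0:ℝ) ≤ 2), rpow_neg (by norm_num : (0:ℝ) ≤ 2)]
    have h2a : (0:ℝ) < 2 ^ a := rpow_pos_of_pos (by norm_num) a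
    field_simp
  have htail : (∑' l, g2 l)
      ≤ 2 * ((2 ^ (2 * a) / (2 * a) + (1 + 1 / (2 * a))) * 2 ^ a) * (ν ^ (a - 1) * h ^ a) := by
    have hq2 : (0:ℝ) < 2 * a := by linarith
    have c1 : (∑' l, g2 l) ≤ 2 * ∑' l : ℕ+ × ℕ+, Kf l.1 l.2 := by
      calc (∑' l, g2 l) ≤ ∑' l : ℕ+ × ℕ+, (Kf l.1 l.2 + Kf l.2 l.1) :=
            Summable.tsum_le_tsum hg2K hg2sum (hKsum.add hKsum2)
        _ = (∑' l : ℕ+ × ℕ+, Kf l.1 l.2) + ∑' l : ℕ+ × ℕ+, Kf l.2 l.1 :=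
            Summable.tsum_add hKsum hKsum2
        _ = 2 * ∑' l : ℕ+ × ℕ+, Kf l.1 l.2 := by rw [hswap]; ring
    have c2 : (∑' l : ℕ+ × ℕ+, Kf l.1 l.2)
        ≤ ν⁻¹ * ((2 ^ (2 * a) / (2 * a) + (1 + 1 / (2 * a))) * s₂ ^ (-(2 * a))) := by
      rw [hKeval]
      exact mul_le_mul_of_nonneg_left htails (inv_nonneg.mpr hν.le)
    have c3 : ν⁻¹ * ((2 ^ (2 * a) / (2 * a) + (1 + 1 / (2 * a))) * s₂ ^ (-(2 * a)))
        = ((2 ^ (2 * a) / (2 * a) + (1 + 1 / (2 * a))) * 2 ^ a) * (ν⁻¹ * T ^ (-a)) := by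
      rw [hs2pow]; ring
    have c4 : ν⁻¹ * T ^ (-a) = ν ^ (a - 1) * h ^ a := by rw [hT, idT2 hν hh]
    have hc40 : (0:ℝ) ≤ (2 ^ (2 * a) / (2 * a) + (1 + 1 / (2 * a))) * 2 ^ a := by positivity
    calc (∑' l, g2 l) ≤ 2 * ∑' l : ℕ+ × ℕ+, Kf l.1 l.2 := c1
      _ ≤ 2 * (((2 ^ (2 * a) / (2 * a) + (1 + 1 / (2 * a))) * 2 ^ a) * (ν ^ (a - 1) * h ^ a)) := by
          apply mul_le_mul_of_nonneg_left _ (by norm_num)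
          calc (∑' l : ℕ+ × ℕ+, Kf l.1 l.2)
              ≤ ν⁻¹ * ((2 ^ (2 * a) / (2 * a) + (1 + 1 / (2 * a))) * s₂ ^ (-(2 * a))) := c2
            _ = ((2 ^ (2 * a) / (2 * a) + (1 + 1 / (2 * a))) * 2 ^ a) * (ν⁻¹ * T ^ (-a)) := c3
            _ = ((2 ^ (2 * a) / (2 * a) + (1 + 1 / (2 * a))) * 2 ^ a) * (ν ^ (a - 1) * h ^ a) := by
                rw [c4]
      _ = 2 * ((2 ^ (2 * a) / (2 * a) + (1 + 1 / (2 * a))) * 2 ^ a) * (ν ^ (a - 1) * h ^ a) := by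
          ring
  have hX0 : 0 ≤ ν ^ (a - 1) * h ^ a :=
    mul_nonneg (rpow_nonneg hν.le _) (rpow_nonneg hh.le _)
  calc (∑' l : ℕ+ × ℕ+,
      (((l.1 : ℕ) : ℝ) ^ 2 + ((l.2 : ℕ) : ℝ) ^ 2) ^ (-a) *
        min (1 / (ν * (((l.1 : ℕ) : ℝ) ^ 2 + ((l.2 : ℕ) : ℝ) ^ 2))) h)
      ≤ (∑' l, g1 l) + ∑' l, g2 l := hstep1
    _ ≤ (1 / (1 - a)) ^ 2 * (ν ^ (a - 1) * h ^ a)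
        + 2 * ((2 ^ (2 * a) / (2 * a) + (1 + 1 / (2 * a))) * 2 ^ a) * (ν ^ (a - 1) * h ^ a) :=
        add_le_add hhead htail
    _ = ((1 / (1 - a)) ^ 2 + 2 * ((2 ^ (2 * a) / (2 * a) + (1 + 1 / (2 * a))) * 2 ^ a))
        * (ν ^ (a - 1) * h ^ a) := by ring

set_option maxHeartbeats 2000000 in
private lemma lower_main (a : ℝ) (ha : 0 < a) (ha1 : a < 1) {ν h : ℝ}
    (hν : 0 < ν) (hν1 : ν < 1) (hh : 0 < h) (hh1 : h ≤ 1) :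
    (1 / 8) * (ν ^ (a - 1) * h ^ a)
      ≤ ∑' l : ℕ+ × ℕ+,
          (((l.1 : ℕ) : ℝ) ^ 2 + ((l.2 : ℕ) : ℝ) ^ 2) ^ (-a) *
            min (1 / (ν * (((l.1 : ℕ) : ℝ) ^ 2 + ((l.2 : ℕ) : ℝ) ^ 2))) h := by
  have hνh : 0 < ν * h := mul_pos hν hh
  have hνh1 : ν * h < 1 := by nlinarith
  have hone : ∀ m : ℕ+, (1 : ℝ) ≤ ((m : ℕ) : ℝ) := by
    intro m; exact_mod_cast m.one_le
  have hFsum := (upper_main a ha ha1 hν hν1 hh hh1).1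
  have hF0 : ∀ l : ℕ+ × ℕ+, 0 ≤ (((l.1 : ℕ) : ℝ) ^ 2 + ((l.2 : ℕ) : ℝ) ^ 2) ^ (-a) *
      min (1 / (ν * (((l.1 : ℕ) : ℝ) ^ 2 + ((l.2 : ℕ) : ℝ) ^ 2))) h := by
    intro l
    have h1 := hone l.1
    have h2 := hone l.2
    apply mul_nonneg (rpow_nonneg (by positivity) _)
    exact le_min (by positivity) hh.le
  rcases le_or_gt (ν * h) (1 / 2) with hc | hc
  · -- main case : T ≥ 2
    set T : ℝ := (ν * h)⁻¹ with hT
    have hT2 : (2 : ℝ) ≤ T := by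
      have h2 : 2 * (ν * h) ≤ 1 := by linarith
      have e : (2 : ℝ) = 2 * (ν * h) * (ν * h)⁻¹ := by field_simp
      rw [hT, e]
      calc 2 * (ν * h) * (ν * h)⁻¹ ≤ 1 * (ν * h)⁻¹ :=
            mul_le_mul_of_nonneg_right h2 (inv_nonneg.mpr hνh.le)
        _ = (ν * h)⁻¹ := one_mul _
    have hT0 : (0 : ℝ) < T := by linarith
    set u : ℝ := Real.sqrt (T / 2) with hu
    have hu1 : 1 ≤ u := by
      rw [hu, show (1 : ℝ) = Real.sqrt 1 from Real.sqrt_one.symm]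
      exact Real.sqrt_le_sqrt (by linarith)
    have hu0 : 0 < u := by linarith
    have husq : u ^ 2 = T / 2 := Real.sq_sqrt (by linarith)
    set K : ℕ := ⌊u⌋₊ with hK
    have hK1 : 1 ≤ K := Nat.le_floor (by exact_mod_cast hu1)
    have hKu : (K : ℝ) ≤ u := Nat.floor_le hu0.le
    have hKu2 : u / 2 ≤ (K : ℝ) := by
      have hK1' : (1 : ℝ) ≤ (K : ℝ) := by exact_mod_cast hK1
      rcases le_total u 2 with h2 | h2
      · linarith
      · have := Nat.lt_floor_add_one u
        rw [← hK] at this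
        linarith
    set Kp : ℕ+ := ⟨K, hK1⟩ with hKp
    set s : Finset (ℕ+ × ℕ+) := Finset.Icc 1 Kp ×ˢ Finset.Icc 1 Kp with hs
    have hterm : ∀ l ∈ s, T ^ (-a) * h ≤
        (((l.1 : ℕ) : ℝ) ^ 2 + ((l.2 : ℕ) : ℝ) ^ 2) ^ (-a) *
          min (1 / (ν * (((l.1 : ℕ) : ℝ) ^ 2 + ((l.2 : ℕ) : ℝ) ^ 2))) h := by
      intro l hl
      rw [hs, Finset.mem_product] at hl
      have hx1 := hone l.1
      have hy1 := hone l.2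
      have hxu : ((l.1 : ℕ) : ℝ) ≤ u := by
        have h1 : (l.1 : ℕ) ≤ K := by
          have := (Finset.mem_Icc.mp hl.1).2
          exact_mod_cast this
        calc ((l.1 : ℕ) : ℝ) ≤ (K : ℝ) := by exact_mod_cast h1
          _ ≤ u := hKu
      have hyu : ((l.2 : ℕ) : ℝ) ≤ u := by
        have h1 : (l.2 : ℕ) ≤ K := by
          have := (Finset.mem_Icc.mp hl.2).2
          exact_mod_cast this
        calc ((l.2 : ℕ) : ℝ) ≤ (K : ℝ) := by exact_mod_cast h1
          _ ≤ u := hKu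
      have hn0 : (0 : ℝ) < ((l.1 : ℕ) : ℝ) ^ 2 + ((l.2 : ℕ) : ℝ) ^ 2 := by positivity
      have hnT : ((l.1 : ℕ) : ℝ) ^ 2 + ((l.2 : ℕ) : ℝ) ^ 2 ≤ T := by
        have e1 : ((l.1 : ℕ) : ℝ) ^ 2 ≤ u ^ 2 := by nlinarith
        have e2 : ((l.2 : ℕ) : ℝ) ^ 2 ≤ u ^ 2 := by nlinarith
        rw [husq] at e1 e2
        linarith
      have hmin : min (1 / (ν * (((l.1 : ℕ) : ℝ) ^ 2 + ((l.2 : ℕ) : ℝ) ^ 2))) h = h := by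
        apply min_eq_right
        rw [le_div_iff₀ (by positivity)]
        have h1 : (((l.1 : ℕ) : ℝ) ^ 2 + ((l.2 : ℕ) : ℝ) ^ 2) * (ν * h) ≤ T * (ν * h) :=
          mul_le_mul_of_nonneg_right hnT hνh.le
        rw [hT, inv_mul_cancel₀ hνh.ne'] at h1
        nlinarith
      rw [hmin]
      apply mul_le_mul_of_nonneg_right _ hh.le
      exact rpow_le_rpow_of_nonpos hn0 hnT (by linarith)
    have hcard : s.card = K * K := by
      rw [hs, Finset.card_product, PNat.card_Icc]
      simp [hKp]
    have hsum1 := Finset.card_nsmul_le_sum s _ _ hterm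
    rw [hcard, nsmul_eq_mul] at hsum1
    have hsum2 : ∑ l ∈ s,
        (((l.1 : ℕ) : ℝ) ^ 2 + ((l.2 : ℕ) : ℝ) ^ 2) ^ (-a) *
          min (1 / (ν * (((l.1 : ℕ) : ℝ) ^ 2 + ((l.2 : ℕ) : ℝ) ^ 2))) h
        ≤ ∑' l : ℕ+ × ℕ+,
          (((l.1 : ℕ) : ℝ) ^ 2 + ((l.2 : ℕ) : ℝ) ^ 2) ^ (-a) *
            min (1 / (ν * (((l.1 : ℕ) : ℝ) ^ 2 + ((l.2 : ℕ) : ℝ) ^ 2))) h :=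
      Summable.sum_le_tsum s (fun l _ => hF0 l) hFsum
    have hTa0 : (0 : ℝ) ≤ T ^ (-a) * h := mul_nonneg (rpow_nonneg hT0.le _) hh.le
    have hKK : T / 8 ≤ (K : ℝ) * (K : ℝ) := by nlinarith
    have hfinal : (1 / 8) * (ν ^ (a - 1) * h ^ a) ≤ ((K * K : ℕ) : ℝ) * (T ^ (-a) * h) := by
      have e1 : T * T ^ (-a) = T ^ (1 - a) := by
        rw [show (1 : ℝ) - a = 1 + (-a) by ring, rpow_one_add' hT0.le (by nlinarith)]
      have e2 : T ^ (1 - a) * h = ν ^ (a - 1) * h ^ a := by rw [hT, idT hν hh]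
      have step : T / 8 * (T ^ (-a) * h) ≤ ((K * K : ℕ) : ℝ) * (T ^ (-a) * h) := by
        apply mul_le_mul_of_nonneg_right _ hTa0
        push_cast
        exact hKK
      calc (1 / 8) * (ν ^ (a - 1) * h ^ a) = (1 / 8) * (T ^ (1 - a) * h) := by rw [e2]
        _ = T / 8 * (T ^ (-a) * h) := by rw [← e1]; ring
        _ ≤ ((K * K : ℕ) : ℝ) * (T ^ (-a) * h) := step
    refine le_trans hfinal (le_trans ?_ hsum2)
    exact_mod_cast hsum1
  · -- small case
    have hν2 : (1 : ℝ) / 2 < ν := by nlinarith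
    have hh2 : (1 : ℝ) / 2 < h := by nlinarith
    have hsingle : ∑ l ∈ ({((1 : ℕ+), (1 : ℕ+))} : Finset (ℕ+ × ℕ+)),
        (((l.1 : ℕ) : ℝ) ^ 2 + ((l.2 : ℕ) : ℝ) ^ 2) ^ (-a) *
          min (1 / (ν * (((l.1 : ℕ) : ℝ) ^ 2 + ((l.2 : ℕ) : ℝ) ^ 2))) h
        ≤ ∑' l : ℕ+ × ℕ+,
          (((l.1 : ℕ) : ℝ) ^ 2 + ((l.2 : ℕ) : ℝ) ^ 2) ^ (-a) *
            min (1 / (ν * (((l.1 : ℕ) : ℝ) ^ 2 + ((l.2 : ℕ) : ℝ) ^ 2))) h :=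
      Summable.sum_le_tsum _ (fun l _ => hF0 l) hFsum
    rw [Finset.sum_singleton] at hsingle
    have e0 : (((1 : ℕ+) : ℕ) : ℝ) = 1 := by norm_num
    rw [e0] at hsingle
    have e1 : (1 : ℝ) ^ 2 + (1 : ℝ) ^ 2 = 2 := by norm_num
    rw [e1] at hsingle
    have h2a : (1 : ℝ) / 2 ≤ (2 : ℝ) ^ (-a) := by
      have := rpow_le_rpow_of_exponent_le (by norm_num : (1:ℝ) ≤ 2) (by linarith : -a ≤ -a)
      have h1 : (2 : ℝ) ^ (-(1:ℝ)) ≤ 2 ^ (-a) :=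
        rpow_le_rpow_of_exponent_le (by norm_num) (by linarith)
      rwa [rpow_neg_one, show ((2:ℝ))⁻¹ = 1/2 by norm_num] at h1
    have hmin2 : (1 : ℝ) / 2 ≤ min (1 / (ν * 2)) h := by
      apply le_min _ hh2.le
      rw [le_div_iff₀ (by positivity)]
      nlinarith
    have hF11 : (1 : ℝ) / 4 ≤ (2 : ℝ) ^ (-a) * min (1 / (ν * 2)) h := by
      have hmn0 : (0:ℝ) ≤ min (1 / (ν * 2)) h := le_trans (by norm_num) hmin2
      nlinarith
    have hX2 : ν ^ (a - 1) * h ^ a ≤ 2 := by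
      have hν' : ν ^ (a - 1) ≤ ((1:ℝ)/2) ^ (a - 1) :=
        rpow_le_rpow_of_nonpos (by norm_num) hν2.le (by linarith)
      have e3 : ((1:ℝ)/2) ^ (a - 1) = 2 ^ (1 - a) := by
        rw [show (1:ℝ)/2 = 2⁻¹ by norm_num, inv_rpow (by norm_num : (0:ℝ) ≤ 2),
          ← rpow_neg (by norm_num : (0:ℝ) ≤ 2)]
        congr 1; ring
      have e4 : (2:ℝ) ^ (1 - a) ≤ 2 := by
        have := rpow_le_rpow_of_exponent_le (by norm_num : (1:ℝ) ≤ 2)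
          (by linarith : 1 - a ≤ 1)
        rwa [rpow_one] at this
      have hha : h ^ a ≤ 1 := Real.rpow_le_one hh.le hh1 ha.le
      have hνa0 : 0 ≤ ν ^ (a - 1) := rpow_nonneg hν.le _
      have hha0 : 0 ≤ h ^ a := rpow_nonneg hh.le _
      calc ν ^ (a - 1) * h ^ a ≤ ν ^ (a - 1) * 1 := by
            apply mul_le_mul_of_nonneg_left hha hνa0
        _ = ν ^ (a - 1) := mul_one _
        _ ≤ 2 := by linarith
    calc (1 / 8) * (ν ^ (a - 1) * h ^ a) ≤ (1 / 8) * 2 := by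
          apply mul_le_mul_of_nonneg_left hX2 (by norm_num)
      _ = 1 / 4 := by norm_num
      _ ≤ (2 : ℝ) ^ (-a) * min (1 / (ν * 2)) h := hF11
      _ ≤ _ := hsingle

theorem stmt13 (a : ℝ) (ha : 0 < a) (ha1 : a < 1) :
    ∃ c C : ℝ, 0 < c ∧ c ≤ C ∧ ∀ ν h : ℝ, 0 < ν → ν < 1 → 0 < h → h ≤ 1 →
      (Summable fun l : ℕ+ × ℕ+ =>
        (((l.1 : ℕ) : ℝ) ^ 2 + ((l.2 : ℕ) : ℝ) ^ 2) ^ (-a) *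
          min (1 / (ν * (((l.1 : ℕ) : ℝ) ^ 2 + ((l.2 : ℕ) : ℝ) ^ 2))) h) ∧
      c * (ν ^ (a - 1) * h ^ a)
          ≤ (∑' l : ℕ+ × ℕ+,
              (((l.1 : ℕ) : ℝ) ^ 2 + ((l.2 : ℕ) : ℝ) ^ 2) ^ (-a) *
                min (1 / (ν * (((l.1 : ℕ) : ℝ) ^ 2 + ((l.2 : ℕ) : ℝ) ^ 2))) h) ∧
      (∑' l : ℕ+ × ℕ+,
          (((l.1 : ℕ) : ℝ) ^ 2 + ((l.2 : ℕ) : ℝ) ^ 2) ^ (-a) *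
            min (1 / (ν * (((l.1 : ℕ) : ℝ) ^ 2 + ((l.2 : ℕ) : ℝ) ^ 2))) h)
          ≤ C * (ν ^ (a - 1) * h ^ a) := by
  refine ⟨1 / 8,
    (1 / (1 - a)) ^ 2 + 2 * ((2 ^ (2 * a) / (2 * a) + (1 + 1 / (2 * a))) * 2 ^ a),
    by norm_num, ?_, ?_⟩
  · have ha2 : (0 : ℝ) < 2 * a := by linarith
    have h2 : (1 : ℝ) ≤ 1 / (1 - a) := by
      rw [le_div_iff₀ (by linarith)]; linarith
    have h1 : (1 : ℝ) ≤ (1 / (1 - a)) ^ 2 := by nlinarith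
    have t1 : (0 : ℝ) ≤ 2 ^ (2 * a) / (2 * a) :=
      div_nonneg (rpow_nonneg (by norm_num) _) ha2.le
    have t2 : (0 : ℝ) ≤ 1 + 1 / (2 * a) := by
      have := one_div_nonneg.mpr ha2.le
      linarith
    have t3 : (0 : ℝ) ≤ (2 : ℝ) ^ a := rpow_nonneg (by norm_num) a
    have h3 : (0 : ℝ) ≤ 2 * ((2 ^ (2 * a) / (2 * a) + (1 + 1 / (2 * a))) * 2 ^ a) :=
      mul_nonneg (by norm_num) (mul_nonneg (add_nonneg t1 t2) t3)
    linarith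
  · intro ν h hν hν1 hh hh1
    obtain ⟨hs, hub⟩ := upper_main a ha ha1 hν hν1 hh hh1
    exact ⟨hs, lower_main a ha ha1 hν hν1 hh hh1, hub⟩
end

section
/- Let b ≥ 1 and a ∈ ℝ with a·b > −1. There exists a constant C > 0, depending only on a and b, such that for all ν > 0 and t ∈ (0,1] with ν t ≤ 1/2: ∫₀^t (−s^{a} log(ν s))^{b} ds ≤ C · t^{1+ab} · (−log(ν t))^{b}. -/
set_option maxHeartbeats 800000

open MeasureTheory intervalIntegral Set

theorem stmt17 (a b : ℝ) (hb : 1 ≤ b) (hab : -1 < a * b) :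
    ∃ C : ℝ, 0 < C ∧ ∀ ν t : ℝ, 0 < ν → 0 < t → t ≤ 1 → ν * t ≤ 1 / 2 →
      (∫ s in (0:ℝ)..t, (-(s ^ a * Real.log (ν * s))) ^ b)
        ≤ C * t ^ (1 + a * b) * (-Real.log (ν * t)) ^ b := by
  have hb0 : (0:ℝ) < b := lt_of_lt_of_le one_pos hb
  have hab1 : (0:ℝ) < 1 + a * b := by linarith
  set c : ℝ := (1 + a * b) / (2 * b) with hc
  have hcpos : 0 < c := by positivity
  set K : ℝ := (1 + 2 / c) ^ b with hK
  have hKpos : 0 < K := Real.rpow_pos_of_pos (by positivity) b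
  refine ⟨2 * K / (1 + a * b), by positivity, ?_⟩
  intro ν t hν ht ht1 hνt
  set L : ℝ := -Real.log (ν * t) with hL
  have hlog2 : (0.6931471803 : ℝ) < Real.log 2 := Real.log_two_gt_d9
  have hLlog : Real.log 2 ≤ L := by
    have h1 : Real.log (ν * t) ≤ Real.log (1 / 2) :=
      Real.log_le_log (by positivity) hνt
    rw [one_div, Real.log_inv] at h1
    rw [hL]; linarith
  have hLpos : 0 < L := lt_of_lt_of_le (by linarith) hLlog
  have h2L : (1:ℝ) ≤ 2 * L := by linarith
  set d : ℝ := (1 + a * b) / 2 with hd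
  have hdpos : 0 < d := by positivity
  set r : ℝ := (a * b - 1) / 2 with hr
  have hr1 : (-1:ℝ) < r := by rw [hr]; linarith
  set M : ℝ := K * L ^ b * t ^ d with hM
  have hMpos : 0 < M := by positivity
  -- pointwise bound on (0, t]
  have key : ∀ s : ℝ, 0 < s → s ≤ t →
      (-(s ^ a * Real.log (ν * s))) ^ b ≤ M * s ^ r := by
    intro s hs hst
    set x : ℝ := Real.log t - Real.log s with hxdef
    have hx0 : 0 ≤ x := by
      have := Real.log_le_log hs hst
      rw [hxdef]; linarith
    have hlogs : -Real.log (ν * s) = L + x := by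
      rw [hL, hxdef, Real.log_mul hν.ne' hs.ne', Real.log_mul hν.ne' ht.ne']
      ring
    have hexp1 : 1 ≤ Real.exp (c * x) := Real.one_le_exp (by positivity)
    have hexp2 : c * x ≤ Real.exp (c * x) := by
      have := Real.add_one_le_exp (c * x); linarith
    have hbound : -Real.log (ν * s) ≤ L * ((1 + 2 / c) * Real.exp (c * x)) := by
      rw [hlogs]
      have h12x : 1 + 2 * x ≤ (1 + 2 / c) * Real.exp (c * x) := by
        have h2 : 2 * x ≤ 2 / c * Real.exp (c * x) := by
          have he : 2 * x = 2 / c * (c * x) := by field_simp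
          rw [he]
          exact mul_le_mul_of_nonneg_left hexp2 (by positivity)
        nlinarith
      calc L + x ≤ L + 2 * L * x := by nlinarith
        _ = L * (1 + 2 * x) := by ring
        _ ≤ L * ((1 + 2 / c) * Real.exp (c * x)) :=
            mul_le_mul_of_nonneg_left h12x hLpos.le
    have hsa : (0:ℝ) < s ^ a := Real.rpow_pos_of_pos hs a
    have hbase : -(s ^ a * Real.log (ν * s)) = s ^ a * (-Real.log (ν * s)) := by ring
    have hnn : 0 ≤ -Real.log (ν * s) := by rw [hlogs]; linarith
    have step1 : (-(s ^ a * Real.log (ν * s))) ^ b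
        ≤ (s ^ a * (L * ((1 + 2 / c) * Real.exp (c * x)))) ^ b := by
      rw [hbase]
      exact Real.rpow_le_rpow (mul_nonneg hsa.le hnn)
        (mul_le_mul_of_nonneg_left hbound hsa.le) hb0.le
    have hexp3 : Real.exp (c * x * b) = t ^ d * (s ^ d)⁻¹ := by
      have hcb : c * x * b = x * d := by
        rw [hc, hd]; field_simp
      rw [hcb, Real.rpow_def_of_pos ht, Real.rpow_def_of_pos hs, ← Real.exp_neg,
        ← Real.exp_add]
      congr 1
      rw [hxdef]; ring
    have hsplit : s ^ (a * b) * s ^ (-d) = s ^ r := by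
      rw [← Real.rpow_add hs]; congr 1; rw [hr, hd]; ring
    have expand : (s ^ a * (L * ((1 + 2 / c) * Real.exp (c * x)))) ^ b = M * s ^ r := by
      rw [Real.mul_rpow hsa.le (by positivity),
        Real.mul_rpow hLpos.le (by positivity),
        Real.mul_rpow (by positivity) (Real.exp_nonneg _),
        ← Real.exp_mul, hexp3, ← Real.rpow_mul hs.le, hM, hK]
      rw [show (s ^ d)⁻¹ = s ^ (-d) by rw [Real.rpow_neg hs.le]]
      linear_combination (L ^ b * (1 + 2 / c) ^ b * t ^ d) * hsplit
    rw [← expand]; exact step1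
  -- integrability
  have hmajInt : IntervalIntegrable (fun s : ℝ => M * s ^ r) volume 0 t :=
    (intervalIntegral.intervalIntegrable_rpow' hr1).const_mul M
  have hfInt : IntervalIntegrable (fun s : ℝ => (-(s ^ a * Real.log (ν * s))) ^ b)
      volume 0 t := by
    apply hmajInt.mono_fun
    · have hmeas : Measurable fun s : ℝ =>
          (-(Real.exp (Real.log s * a) * Real.log (ν * s))) ^ b :=
        (Real.continuous_rpow_const hb0.le).measurable.comp
          ((Real.measurable_log.mul measurable_const).exp.mul
            ((measurable_const.mul measurable_id).log)).neg
      apply hmeas.aestronglyMeasurable.congr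
      rw [uIoc_of_le ht.le]
      filter_upwards [ae_restrict_mem measurableSet_Ioc] with s hs
      rw [Real.rpow_def_of_pos hs.1]
    · rw [uIoc_of_le ht.le]
      filter_upwards [ae_restrict_mem measurableSet_Ioc] with s hs
      have h1 := key s hs.1 hs.2
      have hnn2 : 0 ≤ -Real.log (ν * s) := by
        have hs1 : ν * s ≤ 1 := by
          have := mul_le_mul_of_nonneg_left hs.2 hν.le
          linarith
        have := Real.log_nonpos (mul_nonneg hν.le hs.1.le) hs1
        linarith
      have hfnn : 0 ≤ (-(s ^ a * Real.log (ν * s))) ^ b := by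
        apply Real.rpow_nonneg
        have hrw : -(s ^ a * Real.log (ν * s)) = s ^ a * (-Real.log (ν * s)) := by ring
        rw [hrw]
        exact mul_nonneg (Real.rpow_nonneg hs.1.le a) hnn2
      have hmnn : 0 ≤ M * s ^ r := mul_nonneg hMpos.le (Real.rpow_nonneg hs.1.le r)
      simp only [Real.norm_eq_abs, abs_of_nonneg hfnn, abs_of_nonneg hmnn]
      exact h1
  -- comparison and evaluation
  calc (∫ s in (0:ℝ)..t, (-(s ^ a * Real.log (ν * s))) ^ b)
      ≤ ∫ s in (0:ℝ)..t, M * s ^ r := by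
        apply intervalIntegral.integral_mono_on ht.le hfInt hmajInt
        intro s hs
        rcases eq_or_lt_of_le hs.1 with h0 | h0
        · rw [← h0]
          simp only [mul_zero, Real.log_zero, neg_zero, Real.zero_rpow hb0.ne']
          exact mul_nonneg hMpos.le (Real.rpow_nonneg le_rfl r)
        · exact key s h0 hs.2
    _ = M * ∫ s in (0:ℝ)..t, s ^ r := intervalIntegral.integral_const_mul M _
    _ = M * (t ^ (r + 1) / (r + 1)) := by
        rw [integral_rpow (Or.inl hr1), Real.zero_rpow (by linarith : r + 1 ≠ 0),
          sub_zero]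
    _ = 2 * K / (1 + a * b) * t ^ (1 + a * b) * L ^ b := by
        have h1 : r + 1 = d := by rw [hr, hd]; ring
        have h2 : t ^ d * t ^ d = t ^ (1 + a * b) := by
          rw [← Real.rpow_add ht]; congr 1; rw [hd]; ring
        rw [h1, hM]
        have h3 : K * L ^ b * t ^ d * (t ^ d / d) = K * L ^ b * (t ^ d * t ^ d) / d := by
          ring
        rw [h3, h2, hd]
        field_simp
end
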